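/- arXiv:2011.14205 — 8 statements merged into one kernel-verified Lean document; each statement's English description precedes it below -/
import Mathlib

section
/- Let R be a (not necessarily commutative) ring with unity, let a_1, ..., a_l be elements of R such that 1 - a_j is invertible for each j, and set a = a_1 + ... + a_l. Then (1 - a) * (1 + \sum_{j=1}^{l} a_j (1 - a_j)^{-1}) = 1 - \sum_{(j,k): j \neq k} a_j a_k (1 - a_k)^{-1}, where the last sum runs over all ordered pairs (j,k) with 1 \le j,k \le l and j \neq k. -/
/-- Varzugin's algebraic identity for Beals-Coifman operators:
if `1 - a j` is invertible for each `j` and `a = ∑ j, a j`, then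
`(1 - a) * (1 + ∑ j, a j (1 - a j)⁻¹) = 1 - ∑_{j ≠ k} a j * a k * (1 - a k)⁻¹`. -/
theorem varzugin_identity {R : Type*} [Ring R] {l : ℕ} (a : Fin l → R)
    (h : ∀ j, IsUnit (1 - a j)) :
    (1 - ∑ j, a j) * (1 + ∑ j, a j * Ring.inverse (1 - a j)) =
      1 - ∑ p ∈ (Finset.univ : Finset (Fin l)).offDiag,
            a p.1 * a p.2 * Ring.inverse (1 - a p.2) := by
  set u : Fin l → R := fun j => Ring.inverse (1 - a j) with hu
  have key : ∀ j, a j * u j = u j - 1 := by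
    intro j
    have h1 : (1 - a j) * u j = 1 := Ring.mul_inverse_cancel _ (h j)
    have h2 : u j - a j * u j = 1 := by rw [← h1]; noncomm_ring
    linear_combination (norm := noncomm_ring) -h2
  -- off-diagonal sum as full double sum minus diagonal
  have e3 : ∑ p ∈ (Finset.univ : Finset (Fin l)).offDiag, a p.1 * a p.2 * u p.2
      = (∑ j, ∑ k, a j * (a k * u k)) - ∑ j, a j * (a j * u j) := by
    have hsplit :
        (∑ p ∈ (Finset.univ ×ˢ Finset.univ : Finset (Fin l × Fin l)) with p.1 = p.2,
            a p.1 * a p.2 * u p.2)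
          + ∑ p ∈ (Finset.univ ×ˢ Finset.univ : Finset (Fin l × Fin l)) with ¬ p.1 = p.2,
              a p.1 * a p.2 * u p.2
        = ∑ p ∈ (Finset.univ ×ˢ Finset.univ : Finset (Fin l × Fin l)),
            a p.1 * a p.2 * u p.2 :=
      Finset.sum_filter_add_sum_filter_not _ _ _
    have hdiag : (∑ p ∈ (Finset.univ ×ˢ Finset.univ : Finset (Fin l × Fin l)) with p.1 = p.2,
        a p.1 * a p.2 * u p.2) = ∑ j, a j * (a j * u j) := by
      rw [Finset.sum_filter]
      rw [Finset.sum_product]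
      simp [mul_assoc]
    have hfull : (∑ p ∈ (Finset.univ ×ˢ Finset.univ : Finset (Fin l × Fin l)),
        a p.1 * a p.2 * u p.2) = ∑ j, ∑ k, a j * (a k * u k) := by
      rw [Finset.sum_product]
      simp [mul_assoc]
    have hod : (Finset.univ : Finset (Fin l)).offDiag
        = (Finset.univ ×ˢ Finset.univ : Finset (Fin l × Fin l)).filter (fun p => ¬ p.1 = p.2) := by
      ext p; simp [Finset.mem_offDiag]
    rw [hod, eq_sub_iff_add_eq, ← hdiag, add_comm, hsplit, hfull]
  have e1 : (∑ j, a j * u j) - ∑ j, a j = ∑ j, a j * (a j * u j) := by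
    rw [← Finset.sum_sub_distrib]
    refine Finset.sum_congr rfl fun j _ => ?_
    conv_rhs => rw [key j]
    rw [mul_sub, mul_one]
  have e2 : (∑ j, a j) * (∑ k, a k * u k) = ∑ j, ∑ k, a j * (a k * u k) := by
    rw [Finset.sum_mul]
    refine Finset.sum_congr rfl fun j _ => ?_
    rw [Finset.mul_sum]
  rw [e3]
  have : (1 - ∑ j, a j) * (1 + ∑ j, a j * u j)
      = 1 + ((∑ j, a j * u j) - ∑ j, a j) - (∑ j, a j) * (∑ k, a k * u k) := by noncomm_ring
  rw [this, e1, e2]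
  abel
end

section
/- Let R be a (not necessarily commutative) ring with unity, let a_1, ..., a_l be elements of R such that 1 - a_j is invertible for each j, set a = a_1 + ... + a_l, X = 1 + \sum_{j=1}^{l} a_j (1 - a_j)^{-1}, and Y = \sum_{(j,k): j \neq k} a_j a_k (1 - a_k)^{-1} (sum over ordered pairs with j \neq k). If 1 - Y is invertible, then (1 - a) * X * (1 - Y)^{-1} = 1; in particular X * (1 - Y)^{-1} is a right inverse of 1 - a. -/
/-- The resolvent expansion underlying the separation-of-contributions lemma:
with `a = ∑ j, a j`, `X = 1 + ∑ j, a j (1 - a j)⁻¹`,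
`Y = ∑_{j ≠ k} a j * a k * (1 - a k)⁻¹`, if each `1 - a j` and `1 - Y` are
invertible then `(1 - a) * X * (1 - Y)⁻¹ = 1`, i.e. `X * (1 - Y)⁻¹` is a right
inverse of `1 - a`. -/
theorem resolvent_expansion {R : Type*} [Ring R] {l : ℕ} (a : Fin l → R)
    (h : ∀ j, IsUnit (1 - a j)) (X Y : R)
    (hX : X = 1 + ∑ j, a j * Ring.inverse (1 - a j))
    (hY : Y = ∑ p ∈ (Finset.univ : Finset (Fin l)).offDiag,
            a p.1 * a p.2 * Ring.inverse (1 - a p.2))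
    (hYunit : IsUnit (1 - Y)) :
    (1 - ∑ j, a j) * X * Ring.inverse (1 - Y) = 1 ∧
    (1 - ∑ j, a j) * (X * Ring.inverse (1 - Y)) = 1 := by
  have key : (1 - ∑ j, a j) * X = 1 - Y := by
    set s := ∑ j, a j with hs
    set S := ∑ j, a j * Ring.inverse (1 - a j) with hSdef
    set D := ∑ k, a k * (a k * Ring.inverse (1 - a k)) with hDdef
    have hsplit : s * S = D + Y := by
      rw [hs, hSdef, Finset.sum_mul_sum, ← Finset.sum_product',
        ← Finset.diag_union_offDiag (Finset.univ : Finset (Fin l)),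
        Finset.sum_union (Finset.disjoint_diag_offDiag _), Finset.sum_diag, hY, hDdef]
      congr 1
      exact Finset.sum_congr rfl fun p _ => (mul_assoc _ _ _).symm
    have h2 : S - D = s := by
      rw [hSdef, hDdef, hs, ← Finset.sum_sub_distrib]
      refine Finset.sum_congr rfl fun k _ => ?_
      have : a k * Ring.inverse (1 - a k) - a k * (a k * Ring.inverse (1 - a k))
          = a k * ((1 - a k) * Ring.inverse (1 - a k)) := by noncomm_ring
      rw [this, Ring.mul_inverse_cancel _ (h k), mul_one]
    calc (1 - s) * X = 1 + S - s - s * S := by rw [hX]; noncomm_ring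
      _ = 1 + S - s - (D + Y) := by rw [hsplit]
      _ = 1 + (S - D) - s - Y := by abel
      _ = 1 + s - s - Y := by rw [h2]
      _ = 1 - Y := by abel
  have hmain : (1 - ∑ j, a j) * X * Ring.inverse (1 - Y) = 1 := by
    rw [key, Ring.mul_inverse_cancel _ hYunit]
  exact ⟨hmain, by rw [← mul_assoc]; exact hmain⟩
end

section
/- Let \alpha \in (0, \pi/2), z_0 \in \mathbb{R}, \eta_0 \in \mathbb{R}, and let \Omega = \{ z_0 + \rho e^{i\phi} : \rho > 0, 0 < \phi < \alpha \}. Let \mathcal{K} : [0, \alpha] \to \mathbb{R} be continuously differentiable with \mathcal{K}(0) = 1, \mathcal{K}(\alpha) = 0 and 0 \le \mathcal{K} \le 1. Let R : \mathbb{R} \to \mathbb{C} be bounded and continuously differentiable with R' \in L^2(\mathbb{R}). Let \delta : \Omega \to \mathbb{C} be holomorphic, \delta_0 \in \mathbb{C} \setminus \{0\}, and C_1, C_2 > 0 be such that for all z \in \Omega: |\delta(z)| \le C_1, |\delta(z)^{-1}| \le C_1, |\delta_0 (z - z_0)^{i\eta_0}| \le C_1, |\delta_0^{-1} (z - z_0)^{-i\eta_0}|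 \le C_1, and |\delta(z) - \delta_0 (z - z_0)^{i\eta_0}| \le C_2 |z - z_0|^{1/2}. Define E : \Omega \to \mathbb{C} by E(z) = \mathcal{K}(\arg(z - z_0))\, R(\mathrm{Re}\, z)\, \delta(z)^{-2} + (1 - \mathcal{K}(\arg(z - z_0)))\, R(z_0)\, \delta_0^{-2} (z - z_0)^{-2i\eta_0}. Then there exists a constant C > 0, depending only on C_1, C_2, \sup|\mathcal{K}'|, \|R'\|_{L^2}, and \sup_{\mathbb{R}}|R|, such that for all z \in \Omega the Wirtinger derivative satisfies |\bar{\partial} E(z)| \le C\big( |z - z_0|^{-1/2} + |R'(\mathrm{Re}\, z)| \big). -/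
open MeasureTheory

/-- The Wirtinger derivative `∂̄F = (∂F/∂x + i ∂F/∂y)/2` with respect to `z̄`. -/
noncomputable def dbar (F : ℂ → ℂ) (z : ℂ) : ℂ :=
  (deriv (fun x : ℝ => F ((x : ℂ) + z.im * Complex.I)) z.re
    + Complex.I * deriv (fun y : ℝ => F ((z.re : ℂ) + y * Complex.I)) z.im) / 2

open Complex

lemma my_arg_bounds {z : ℂ} (hz : 0 < z.re) :
    -(Real.pi/2) < z.arg ∧ z.arg < Real.pi/2 := by
  have hz0 : z ≠ 0 := fun h => by simp [h] at hz
  have hcos : 0 < Real.cos z.arg := by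
    rw [Complex.cos_arg hz0]
    exact div_pos hz (norm_pos_iff.mpr hz0)
  constructor
  · by_contra h
    push_neg at h
    have h2 : Real.cos z.arg ≤ 0 := by
      rw [← Real.cos_neg]
      exact Real.cos_nonpos_of_pi_div_two_le_of_le (by linarith)
        (by have := Complex.neg_pi_lt_arg z; linarith [Real.pi_pos])
    linarith
  · by_contra h
    push_neg at h
    have h2 : Real.cos z.arg ≤ 0 :=
      Real.cos_nonpos_of_pi_div_two_le_of_le h
        (by have := Complex.arg_le_pi z; linarith [Real.pi_pos])
    linarith

lemma my_arg_eq_arctan {z : ℂ} (hz : 0 < z.re) :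
    z.arg = Real.arctan (z.im / z.re) := by
  obtain ⟨h1, h2⟩ := my_arg_bounds hz
  rw [← Complex.tan_arg, Real.arctan_tan h1 h2]

lemma my_slice_x {G : ℂ → ℂ} {d : ℂ} {w : ℂ} (hG : HasDerivAt G d w) :
    HasDerivAt (fun x : ℝ => G ((x : ℂ) + w.im * Complex.I)) d w.re := by
  have h1 : HasDerivAt (fun z : ℂ => G (z + w.im * Complex.I)) (d * 1) (w.re : ℂ) := by
    apply HasDerivAt.comp
    · rw [show ((w.re : ℂ) + w.im * Complex.I) = w from Complex.re_add_im w] at *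
      exact hG
    · simpa using (hasDerivAt_id ((w.re : ℂ))).add_const (↑w.im * Complex.I)
  simpa using h1.comp_ofReal

lemma my_slice_y {G : ℂ → ℂ} {d : ℂ} {w : ℂ} (hG : HasDerivAt G d w) :
    HasDerivAt (fun y : ℝ => G ((w.re : ℂ) + y * Complex.I)) (d * Complex.I) w.im := by
  have h1 : HasDerivAt (fun z : ℂ => G ((w.re : ℂ) + z * Complex.I)) (d * Complex.I) (w.im : ℂ) := by
    apply HasDerivAt.comp
    · rw [show ((w.re : ℂ) + w.im * Complex.I) = w from Complex.re_add_im w] at *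
      exact hG
    · simpa using ((hasDerivAt_id ((w.im : ℂ))).mul_const Complex.I).const_add (w.re : ℂ)
  exact h1.comp_ofReal

lemma my_argslice_x {z₀ : ℝ} {w : ℂ} (hre : 0 < w.re - z₀) :
    HasDerivAt (fun x : ℝ => ((x:ℂ) + w.im * Complex.I - (z₀:ℂ)).arg)
      (-w.im / ((w.re - z₀)^2 + w.im^2)) w.re := by
  have hrp2 : 0 < (w.re - z₀)^2 + w.im^2 := by positivity
  have hsub : HasDerivAt (fun x : ℝ => x - z₀) 1 w.re := (hasDerivAt_id _).sub_const z₀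
  have hdiv : HasDerivAt (fun x : ℝ => w.im / (x - z₀))
      ((0 * (w.re - z₀) - w.im * 1) / (w.re - z₀)^2) w.re :=
    (hasDerivAt_const _ _).div hsub (ne_of_gt hre)
  have harctan := hdiv.arctan
  have heq : (fun x : ℝ => Real.arctan (w.im / (x - z₀)))
      =ᶠ[nhds w.re] (fun x : ℝ => ((x:ℂ) + w.im * Complex.I - (z₀:ℂ)).arg) := by
    have hmem : ∀ᶠ x in nhds w.re, z₀ < x := eventually_gt_nhds (by linarith)
    filter_upwards [hmem] with x hx
    rw [my_arg_eq_arctan (by simp; linarith)]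
    simp
  have := harctan.congr_of_eventuallyEq heq.symm
  refine this.congr_deriv ?_
  field_simp
  ring

lemma my_argslice_y {z₀ : ℝ} {w : ℂ} (hre : 0 < w.re - z₀) :
    HasDerivAt (fun y : ℝ => ((w.re:ℂ) + (y:ℂ) * Complex.I - (z₀:ℂ)).arg)
      ((w.re - z₀) / ((w.re - z₀)^2 + w.im^2)) w.im := by
  have hrp2 : 0 < (w.re - z₀)^2 + w.im^2 := by positivity
  have hid : HasDerivAt (fun y : ℝ => y / (w.re - z₀)) (1 / (w.re - z₀)) w.im := by
    simpa using (hasDerivAt_id w.im).div_const (w.re - z₀)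
  have harctan := hid.arctan
  have heq : (fun y : ℝ => Real.arctan (y / (w.re - z₀)))
      =ᶠ[nhds w.im] (fun y : ℝ => ((w.re:ℂ) + (y:ℂ) * Complex.I - (z₀:ℂ)).arg) := by
    apply Filter.Eventually.of_forall
    intro y
    show Real.arctan (y / (w.re - z₀)) = ((w.re:ℂ) + (y:ℂ) * Complex.I - (z₀:ℂ)).arg
    rw [my_arg_eq_arctan (by simp; linarith)]
    simp
  have := harctan.congr_of_eventuallyEq heq.symm
  refine this.congr_deriv ?_
  field_simp


lemma my_holder {R : ℝ → ℂ} (hR : ContDiff ℝ 1 R) (hR2 : MemLp (deriv R) 2 volume)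
    {a b : ℝ} (hab : a ≤ b) :
    ‖R b - R a‖ ≤ (eLpNorm (deriv R) 2 volume).toReal * (b - a) ^ ((1:ℝ)/2) := by
  have hcont : Continuous (deriv R) := hR.continuous_deriv le_rfl
  have hftc : ∫ x in a..b, deriv R x = R b - R a := by
    apply intervalIntegral.integral_deriv_eq_sub
    · intro x _; exact (hR.differentiable (by norm_num)).differentiableAt
    · exact hcont.intervalIntegrable a b
  rw [← hftc]
  have h1 : ‖∫ x in a..b, deriv R x‖ ≤ ∫ x in Set.Ioc a b, ‖deriv R x‖ := by
    rw [intervalIntegral.integral_of_le hab]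
    exact norm_integral_le_integral_norm _
  refine h1.trans ?_
  set μ := volume.restrict (Set.Ioc a b) with hμ
  have hint : Integrable (deriv R) μ := by
    apply (hR2.restrict _).integrable one_le_two
  have h2 : ∫ x in Set.Ioc a b, ‖deriv R x‖ = (eLpNorm (deriv R) 1 μ).toReal := by
    rw [eLpNorm_one_eq_lintegral_enorm,
      integral_norm_eq_lintegral_enorm hint.aestronglyMeasurable]
  rw [h2]
  have h3 : eLpNorm (deriv R) 1 μ ≤
      eLpNorm (deriv R) 2 μ * μ Set.univ ^ ((1:ℝ)/1 - 1/2) := by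
    have := eLpNorm_le_eLpNorm_mul_rpow_measure_univ (p := 1) (q := 2)
      (one_le_two) hint.aestronglyMeasurable
    simpa using this
  have hμuniv : μ Set.univ = ENNReal.ofReal (b - a) := by
    simp [hμ, Real.volume_Ioc]
  have h4 : eLpNorm (deriv R) 2 μ ≤ eLpNorm (deriv R) 2 volume :=
    eLpNorm_mono_measure _ Measure.restrict_le_self
  have hfin : eLpNorm (deriv R) 2 volume ≠ ⊤ := hR2.2.ne
  have h5 : eLpNorm (deriv R) 1 μ ≤
      eLpNorm (deriv R) 2 volume * ENNReal.ofReal (b - a) ^ ((1:ℝ)/1 - 1/2) := by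
    refine h3.trans ?_
    rw [hμuniv]
    exact mul_le_mul_left h4 _
  have hrhs : (eLpNorm (deriv R) 2 volume * ENNReal.ofReal (b - a) ^ ((1:ℝ)/1 - 1/2)).toReal
      = (eLpNorm (deriv R) 2 volume).toReal * (b - a) ^ ((1:ℝ)/2) := by
    rw [ENNReal.toReal_mul, ← ENNReal.toReal_rpow,
      ENNReal.toReal_ofReal (by linarith : (0:ℝ) ≤ b - a)]
    norm_num
  calc (eLpNorm (deriv R) 1 μ).toReal
      ≤ (eLpNorm (deriv R) 2 volume * ENNReal.ofReal (b - a) ^ ((1:ℝ)/1 - 1/2)).toReal := by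
        apply ENNReal.toReal_mono _ h5
        exact ENNReal.mul_ne_top hfin (ENNReal.rpow_ne_top_of_nonneg (by norm_num) ENNReal.ofReal_ne_top)
    _ = _ := hrhs

lemma my_sector_eq (z₀ α : ℝ) (hα : 0 < α) (hα' : α < Real.pi/2) :
    {w : ℂ | 0 < (w - (z₀:ℂ)).arg ∧ (w - (z₀:ℂ)).arg < α}
      = {w : ℂ | 0 < (w - (z₀:ℂ)).im} ∩
        {w : ℂ | ((w - (z₀:ℂ)) * ((Real.cos α : ℂ) - (Real.sin α : ℂ) * Complex.I)).im < 0} := by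
  have hπ := Real.pi_pos
  ext w
  simp only [Set.mem_setOf_eq, Set.mem_inter_iff]
  set p := w - (z₀:ℂ) with hp
  have hexp : ((p * ((Real.cos α : ℂ) - (Real.sin α : ℂ) * Complex.I)).im)
      = p.im * Real.cos α - p.re * Real.sin α := by
    simp [Complex.mul_im, Complex.sub_re, Complex.sub_im, Complex.mul_re,
      Complex.sin_ofReal_re, Complex.cos_ofReal_re]
    ring
  constructor
  · rintro ⟨h1, h2⟩
    have hp0 : p ≠ 0 := by
      intro h; rw [h, Complex.arg_zero] at h1; exact lt_irrefl 0 h1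
    have habs : 0 < ‖p‖ := norm_pos_iff.mpr hp0
    have hsin : p.im = ‖p‖ * Real.sin p.arg := by
      rw [Complex.sin_arg]; field_simp
    have hcos : p.re = ‖p‖ * Real.cos p.arg := by
      rw [Complex.cos_arg hp0]; field_simp
    have him : 0 < p.im := by
      rw [hsin]
      exact mul_pos habs (Real.sin_pos_of_pos_of_lt_pi h1 (by linarith))
    refine ⟨him, ?_⟩
    rw [hexp, hsin, hcos]
    have : ‖p‖ * Real.sin p.arg * Real.cos α
        - ‖p‖ * Real.cos p.arg * Real.sin α
        = ‖p‖ * Real.sin (p.arg - α) := by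
      rw [Real.sin_sub]; ring
    rw [this]
    apply mul_neg_of_pos_of_neg habs
    apply Real.sin_neg_of_neg_of_neg_pi_lt (by linarith) (by linarith)
  · rintro ⟨him, hlt⟩
    have hp0 : p ≠ 0 := by
      intro h; rw [h] at him; simp at him
    have habs : 0 < ‖p‖ := norm_pos_iff.mpr hp0
    have h1 : 0 < p.arg := by
      rcases lt_or_eq_of_le (Complex.arg_nonneg_iff.mpr him.le) with h | h
      · exact h
      · exfalso
        have := Complex.arg_eq_zero_iff.mp h.symm
        exact him.ne' this.2
    refine ⟨h1, ?_⟩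
    by_contra hle
    push_neg at hle
    have hsin : p.im = ‖p‖ * Real.sin p.arg := by
      rw [Complex.sin_arg]; field_simp
    have hcos : p.re = ‖p‖ * Real.cos p.arg := by
      rw [Complex.cos_arg hp0]; field_simp
    rw [hexp, hsin, hcos] at hlt
    have heq : ‖p‖ * Real.sin p.arg * Real.cos α
        - ‖p‖ * Real.cos p.arg * Real.sin α
        = ‖p‖ * Real.sin (p.arg - α) := by
      rw [Real.sin_sub]; ring
    rw [heq] at hlt
    have hge : 0 ≤ Real.sin (p.arg - α) := by
      apply Real.sin_nonneg_of_nonneg_of_le_pi (by linarith)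
      have := Complex.arg_le_pi p
      linarith
    nlinarith

lemma my_sector_open (z₀ α : ℝ) (hα : 0 < α) (hα' : α < Real.pi/2) :
    IsOpen {w : ℂ | 0 < (w - (z₀:ℂ)).arg ∧ (w - (z₀:ℂ)).arg < α} := by
  rw [my_sector_eq z₀ α hα hα']
  apply IsOpen.inter
  · exact isOpen_lt continuous_const (Complex.continuous_im.comp
      ((continuous_id.sub continuous_const)))
  · exact isOpen_lt (Complex.continuous_im.comp
      (((continuous_id.sub continuous_const).mul continuous_const))) continuous_const

lemma my_sector_preconnected (z₀ α : ℝ) (hα : 0 < α) (hα' : α < Real.pi/2) :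
    IsPreconnected {w : ℂ | 0 < (w - (z₀:ℂ)).arg ∧ (w - (z₀:ℂ)).arg < α} := by
  rw [my_sector_eq z₀ α hα hα']
  apply Convex.isPreconnected
  apply Convex.inter
  · have : {w : ℂ | 0 < (w - (z₀:ℂ)).im} = {w : ℂ | 0 < w.im} := by
      ext w; simp [Complex.sub_im]
    rw [this]
    exact convex_halfSpace_gt (⟨fun a b => by simp, fun r a => by
      simp [Complex.smul_im]⟩ : IsLinearMap ℝ (fun w : ℂ => w.im)) 0
  · set c : ℂ := (Real.cos α : ℂ) - (Real.sin α : ℂ) * Complex.I with hc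
    have : {w : ℂ | ((w - (z₀:ℂ)) * c).im < 0}
        = {w : ℂ | (w * c).im < (((z₀:ℂ)) * c).im} := by
      ext w
      simp only [Set.mem_setOf_eq, sub_mul, Complex.sub_im]
      constructor <;> intro h <;> linarith
    rw [this]
    exact convex_halfSpace_lt (⟨fun a b => by simp [add_mul], fun r a => by
      simp only [smul_mul_assoc, Complex.smul_im, smul_eq_mul]⟩ :
        IsLinearMap ℝ (fun w : ℂ => (w * c).im)) _

lemma my_sector_facts {z₀ α : ℝ} (hα : 0 < α) (hα' : α < Real.pi/2) {w : ℂ}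
    (hw : w ∈ {w : ℂ | 0 < (w - (z₀:ℂ)).arg ∧ (w - (z₀:ℂ)).arg < α}) :
    0 < (w - (z₀:ℂ)).re ∧ 0 < (w - (z₀:ℂ)).im ∧ w - (z₀:ℂ) ≠ 0 := by
  have hπ := Real.pi_pos
  obtain ⟨h1, h2⟩ := hw
  set p := w - (z₀:ℂ)
  have hp0 : p ≠ 0 := by
    intro h; rw [h, Complex.arg_zero] at h1; exact lt_irrefl 0 h1
  have habs : 0 < ‖p‖ := norm_pos_iff.mpr hp0
  have hcos : p.re = ‖p‖ * Real.cos p.arg := by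
    rw [Complex.cos_arg hp0]; field_simp
  have hsin : p.im = ‖p‖ * Real.sin p.arg := by
    rw [Complex.sin_arg]; field_simp
  refine ⟨?_, ?_, hp0⟩
  · rw [hcos]
    exact mul_pos habs (Real.cos_pos_of_mem_Ioo ⟨by linarith, by linarith⟩)
  · rw [hsin]
    exact mul_pos habs (Real.sin_pos_of_pos_of_lt_pi h1 (by linarith))

lemma my_cpow_inv_unit {p δ₀ : ℂ} (hp : p ≠ 0) (hδ₀ : δ₀ ≠ 0) (η₀ : ℝ) :
    (δ₀ * p ^ (Complex.I * (η₀:ℂ))) * (δ₀⁻¹ * p ^ (-(Complex.I * (η₀:ℂ)))) = 1 := by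
  rw [Complex.cpow_neg]
  have hne : p ^ (Complex.I * (η₀:ℂ)) ≠ 0 := by
    simp [Complex.cpow_eq_zero_iff, hp]
  field_simp

lemma my_q_lower {p δ₀ : ℂ} (hp : p ≠ 0) (hδ₀ : δ₀ ≠ 0) {η₀ C₁ : ℝ} (hC₁ : 0 < C₁)
    (h4 : ‖δ₀⁻¹ * p ^ (-(Complex.I * (η₀:ℂ)))‖ ≤ C₁) :
    C₁⁻¹ ≤ ‖δ₀ * p ^ (Complex.I * (η₀:ℂ))‖ := by
  have h := my_cpow_inv_unit hp hδ₀ η₀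
  have h1 : (1:ℝ) = ‖(δ₀ * p ^ (Complex.I * (η₀:ℂ))) * (δ₀⁻¹ * p ^ (-(Complex.I * (η₀:ℂ))))‖ := by
    rw [h]; simp
  rw [norm_mul] at h1
  rw [inv_le_iff_one_le_mul₀ hC₁]
  calc (1:ℝ) = _ := h1
    _ ≤ ‖δ₀ * p ^ (Complex.I * (η₀:ℂ))‖ * C₁ := by
        apply mul_le_mul_of_nonneg_left h4 (norm_nonneg _)

lemma my_delta_ne_zero (α z₀ η₀ : ℝ) (hα : 0 < α) (hα' : α < Real.pi/2)
    (δ : ℂ → ℂ) (δ₀ : ℂ) (hδ₀ : δ₀ ≠ 0) (C₁ C₂ : ℝ) (hC₁ : 0 < C₁) (hC₂ : 0 < C₂)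
    (hδ : DifferentiableOn ℂ δ {w : ℂ | 0 < (w - (z₀:ℂ)).arg ∧ (w - (z₀:ℂ)).arg < α})
    (h2 : ∀ w ∈ {w : ℂ | 0 < (w - (z₀:ℂ)).arg ∧ (w - (z₀:ℂ)).arg < α}, ‖(δ w)⁻¹‖ ≤ C₁)
    (h4 : ∀ w ∈ {w : ℂ | 0 < (w - (z₀:ℂ)).arg ∧ (w - (z₀:ℂ)).arg < α},
      ‖δ₀⁻¹ * (w - (z₀:ℂ)) ^ (-(Complex.I * (η₀:ℂ)))‖ ≤ C₁)
    (h5 : ∀ w ∈ {w : ℂ | 0 < (w - (z₀:ℂ)).arg ∧ (w - (z₀:ℂ)).arg < α},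
      ‖δ w - δ₀ * (w - (z₀:ℂ)) ^ (Complex.I * (η₀:ℂ))‖ ≤ C₂ * ‖w - (z₀:ℂ)‖ ^ ((1:ℝ)/2)) :
    ∀ w ∈ {w : ℂ | 0 < (w - (z₀:ℂ)).arg ∧ (w - (z₀:ℂ)).arg < α}, δ w ≠ 0 := by
  set S := {w : ℂ | 0 < (w - (z₀:ℂ)).arg ∧ (w - (z₀:ℂ)).arg < α} with hS
  have hSopen : IsOpen S := my_sector_open z₀ α hα hα'
  have hSconn : IsPreconnected S := my_sector_preconnected z₀ α hα hα'
  have hcont : ContinuousOn δ S := hδ.continuousOn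
  -- key dichotomy: on S, either δ w = 0 or ‖δ w‖ ≥ C₁⁻¹
  have hdich : ∀ w ∈ S, δ w = 0 ∨ C₁⁻¹ ≤ ‖δ w‖ := by
    intro w hw
    rcases eq_or_ne (δ w) 0 with h | h
    · exact Or.inl h
    · right
      have := h2 w hw
      rw [norm_inv] at this
      rw [inv_le_iff_one_le_mul₀ hC₁]
      calc (1:ℝ) = ‖δ w‖ * ‖δ w‖⁻¹ := by
            rw [mul_inv_cancel₀ (norm_ne_zero_iff.mpr h)]
        _ ≤ ‖δ w‖ * C₁ := mul_le_mul_of_nonneg_left this (norm_nonneg _)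
  -- witness point near z₀ where δ ≠ 0
  set b : ℝ := (2 * C₁ * C₂)⁻¹ with hb
  have hbpos : 0 < b := by positivity
  set ε : ℝ := b ^ 2 with hε
  have hεpos : 0 < ε := by positivity
  set wε : ℂ := (z₀:ℂ) + (ε:ℝ) * (Complex.cos (α/2 : ℝ) + Complex.sin (α/2 : ℝ) * Complex.I)
    with hwε
  have hpε : wε - (z₀:ℂ) = (ε:ℝ) * (Complex.cos (α/2 : ℝ) + Complex.sin (α/2 : ℝ) * Complex.I) := by
    rw [hwε]; ring
  have hπ := Real.pi_pos
  have hargε : (wε - (z₀:ℂ)).arg = α/2 := by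
    rw [hpε]
    exact Complex.arg_mul_cos_add_sin_mul_I hεpos ⟨by linarith, by linarith⟩
  have hwεS : wε ∈ S := by
    rw [hS]; constructor <;> rw [hargε] <;> linarith
  have habsε : ‖wε - (z₀:ℂ)‖ = ε := by
    rw [hpε]
    rw [norm_mul, Complex.norm_real, Real.norm_of_nonneg hεpos.le]
    have : ‖(Complex.cos (α/2 : ℝ) + Complex.sin (α/2 : ℝ) * Complex.I)‖ = 1 :=
      Complex.norm_cos_add_sin_mul_I _
    rw [show ‖Complex.cos (α/2 : ℝ) + Complex.sin (α/2 : ℝ) * Complex.I‖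
      = ‖(Complex.cos (α/2 : ℝ) + Complex.sin (α/2 : ℝ) * Complex.I)‖ from rfl, this,
      mul_one]
  have hrpow : ‖wε - (z₀:ℂ)‖ ^ ((1:ℝ)/2) = b := by
    rw [habsε, hε, ← Real.rpow_natCast b 2, ← Real.rpow_mul hbpos.le]
    norm_num
  have hδwε : δ wε ≠ 0 := by
    intro h0
    have h5' := h5 wε hwεS
    rw [h0, zero_sub, norm_neg, hrpow] at h5'
    have hq := my_q_lower (p := wε - (z₀:ℂ)) (by
      intro h; rw [h, Complex.arg_zero] at hargε; linarith) hδ₀ (η₀ := η₀) hC₁ (h4 wε hwεS)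
    rw [hb] at h5'
    have : C₂ * (2 * C₁ * C₂)⁻¹ = (2 * C₁)⁻¹ := by
      field_simp
    rw [this] at h5'
    have : (2 * C₁)⁻¹ < C₁⁻¹ := by
      apply inv_strictAnti₀ hC₁; linarith
    linarith
  -- preconnectedness argument
  intro w hw
  intro hzero
  set U : Set ℂ := {u : ℂ | u ∈ S ∧ ‖δ u‖ < C₁⁻¹} with hU
  set V : Set ℂ := {u : ℂ | u ∈ S ∧ δ u ≠ 0} with hV
  have hUopen : IsOpen U := by
    rw [isOpen_iff_mem_nhds]
    rintro u ⟨huS, hu⟩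
    have hc : ContinuousAt δ u := hcont.continuousAt (hSopen.mem_nhds huS)
    have h1 : ∀ᶠ v in nhds u, ‖δ v‖ < C₁⁻¹ :=
      hc.norm.eventually_lt_const hu
    have h2' : ∀ᶠ v in nhds u, v ∈ S := hSopen.mem_nhds huS
    filter_upwards [h1, h2'] with v hv1 hv2
    exact ⟨hv2, hv1⟩
  have hVopen : IsOpen V := by
    rw [isOpen_iff_mem_nhds]
    rintro u ⟨huS, hu⟩
    have hc : ContinuousAt δ u := hcont.continuousAt (hSopen.mem_nhds huS)
    have h1 : ∀ᶠ v in nhds u, δ v ≠ 0 := hc.eventually_ne hu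
    have h2' : ∀ᶠ v in nhds u, v ∈ S := hSopen.mem_nhds huS
    filter_upwards [h1, h2'] with v hv1 hv2
    exact ⟨hv2, hv1⟩
  have hcover : S ⊆ U ∪ V := by
    intro u huS
    rcases eq_or_ne (δ u) 0 with h | h
    · left; exact ⟨huS, by rw [h]; simp [inv_pos.mpr hC₁]⟩
    · right; exact ⟨huS, h⟩
  have hUne : (S ∩ U).Nonempty := ⟨w, hw, hw, by rw [hzero]; simp [inv_pos.mpr hC₁]⟩
  have hVne : (S ∩ V).Nonempty := ⟨wε, hwεS, hwεS, hδwε⟩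
  obtain ⟨u, huS, huU, huV⟩ := hSconn U V hUopen hVopen hcover hUne hVne
  rcases hdich u huS with h | h
  · exact huV.2 h
  · exact absurd huU.2 (not_lt.mpr h)


lemma my_dbar_formula (z₀ η₀ : ℝ)
    (K : ℝ → ℝ) (hK : ContDiff ℝ 1 K)
    (R : ℝ → ℂ) (hR : ContDiff ℝ 1 R)
    (δ : ℂ → ℂ) (δ₀ : ℂ)
    (E : ℂ → ℂ)
    (hE : ∀ w, E w =
      (K ((w - (z₀ : ℂ)).arg) : ℂ) * R w.re * ((δ w) ^ 2)⁻¹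
        + (1 - (K ((w - (z₀ : ℂ)).arg) : ℂ)) * R z₀ * (δ₀ ^ 2)⁻¹ *
            (w - (z₀ : ℂ)) ^ (-(2 * Complex.I * (η₀ : ℂ))))
    (w : ℂ) (hre : 0 < w.re - z₀) (hδw : DifferentiableAt ℂ δ w) (hδne : δ w ≠ 0) :
    dbar E w =
      (((deriv K ((w - (z₀:ℂ)).arg) : ℝ) : ℂ)
          * ((-(w.im:ℂ) + Complex.I * ((w.re:ℂ) - (z₀:ℂ))) / (((w.re - z₀)^2 + w.im^2 : ℝ) : ℂ))
          * (R w.re * ((δ w) ^ 2)⁻¹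
              - R z₀ * (δ₀ ^ 2)⁻¹ * (w - (z₀:ℂ)) ^ (-(2 * Complex.I * (η₀ : ℂ))))
        + (K ((w - (z₀:ℂ)).arg) : ℂ) * deriv R w.re * ((δ w) ^ 2)⁻¹) / 2 := by
  set μ : ℂ := -(2 * Complex.I * (η₀ : ℂ)) with hμ
  have hwsub : ((w.re : ℂ) + (w.im : ℂ) * Complex.I) = w := Complex.re_add_im w
  -- atoms for holomorphic derivatives
  obtain ⟨d₁, hG₁⟩ : ∃ d, HasDerivAt (fun z : ℂ => ((δ z) ^ 2)⁻¹) d w := by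
    refine ⟨_, HasDerivAt.inv (hδw.hasDerivAt.pow 2) (pow_ne_zero 2 hδne)⟩
  obtain ⟨d₂, hG₂⟩ : ∃ d, HasDerivAt (fun z : ℂ => (z - (z₀:ℂ)) ^ μ) d w := by
    refine ⟨_, HasDerivAt.cpow_const ((hasDerivAt_id w).sub_const (z₀:ℂ)) ?_⟩
    rw [Complex.mem_slitPlane_iff]
    left; simp [hre]
  -- K at the arg, R at w.re
  have hKd : HasDerivAt K (deriv K ((w - (z₀:ℂ)).arg)) ((w - (z₀:ℂ)).arg) :=
    ((hK.differentiable (by norm_num)) _).hasDerivAt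
  have hRd : HasDerivAt R (deriv R w.re) w.re :=
    ((hR.differentiable (by norm_num)) _).hasDerivAt
  set θ := (w - (z₀:ℂ)).arg with hθ
  set rp2 : ℝ := (w.re - z₀)^2 + w.im^2 with hrp2
  -- x-slice pieces
  have hargx := my_argslice_x (w := w) hre
  have hargxw : ((w.re:ℂ) + (w.im:ℂ) * Complex.I - (z₀:ℂ)).arg = θ := by rw [hwsub]
  have hKxC : HasDerivAt (fun x : ℝ => ((K (((x:ℂ) + w.im * Complex.I - (z₀:ℂ)).arg)) : ℂ))
      ((deriv K θ * (-w.im / rp2) : ℝ) : ℂ) w.re := by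
    apply HasDerivAt.ofReal_comp
    have hKd2 : HasDerivAt K (deriv K θ)
        ((fun x : ℝ => (((x:ℂ) + w.im * Complex.I - (z₀:ℂ)).arg)) w.re) := by
      show HasDerivAt K (deriv K θ) (((w.re:ℂ) + w.im * Complex.I - (z₀:ℂ)).arg)
      rw [hargxw]; exact hKd
    exact hKd2.comp w.re hargx
  have hargy := my_argslice_y (w := w) hre
  have hargyw : ((w.re:ℂ) + (w.im:ℂ) * Complex.I - (z₀:ℂ)).arg = θ := by rw [hwsub]
  have hKyC : HasDerivAt (fun y : ℝ => ((K (((w.re:ℂ) + (y:ℂ) * Complex.I - (z₀:ℂ)).arg)) : ℂ))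
      ((deriv K θ * ((w.re - z₀) / rp2) : ℝ) : ℂ) w.im := by
    apply HasDerivAt.ofReal_comp
    have hKd2 : HasDerivAt K (deriv K θ)
        ((fun y : ℝ => (((w.re:ℂ) + (y:ℂ) * Complex.I - (z₀:ℂ)).arg)) w.im) := by
      show HasDerivAt K (deriv K θ) (((w.re:ℂ) + (w.im:ℂ) * Complex.I - (z₀:ℂ)).arg)
      rw [hargyw]; exact hKd
    exact hKd2.comp w.im hargy
  have hRx : HasDerivAt (fun x : ℝ => R (((x:ℂ) + w.im * Complex.I).re)) (deriv R w.re) w.re := by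
    apply hRd.congr_of_eventuallyEq
    apply Filter.Eventually.of_forall
    intro x
    show R (((x:ℂ) + w.im * Complex.I).re) = R x
    norm_num
  have hRy : HasDerivAt (fun y : ℝ => R (((w.re:ℂ) + (y:ℂ) * Complex.I).re)) 0 w.im := by
    apply (hasDerivAt_const w.im (R w.re)).congr_of_eventuallyEq
    apply Filter.Eventually.of_forall
    intro y
    show R (((w.re:ℂ) + (y:ℂ) * Complex.I).re) = R w.re
    norm_num
  have hq1x := my_slice_x hG₁
  have hq1y := my_slice_y hG₁
  have hq2x := my_slice_x hG₂
  have hq2y := my_slice_y hG₂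
  have hSlice1 := ((hKxC.mul hRx).mul hq1x).add
    ((((hKxC.const_sub 1).mul_const (R z₀)).mul_const ((δ₀^2)⁻¹)).mul hq2x)
  have hSlice2 := ((hKyC.mul hRy).mul hq1y).add
    ((((hKyC.const_sub 1).mul_const (R z₀)).mul_const ((δ₀^2)⁻¹)).mul hq2y)
  simp only [Pi.mul_def, Pi.add_def] at hSlice1 hSlice2
  simp only [hwsub] at hSlice1 hSlice2
  have hfunx : (fun x : ℝ => E ((x:ℂ) + w.im * Complex.I)) =
      (fun x : ℝ => ((K ((((x:ℂ) + w.im * Complex.I) - (z₀:ℂ)).arg)) : ℂ)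
          * R (((x:ℂ) + w.im * Complex.I).re) * ((δ ((x:ℂ) + w.im * Complex.I)) ^ 2)⁻¹
        + (1 - ((K ((((x:ℂ) + w.im * Complex.I) - (z₀:ℂ)).arg)) : ℂ)) * R z₀ * (δ₀ ^ 2)⁻¹ *
            (((x:ℂ) + w.im * Complex.I) - (z₀:ℂ)) ^ μ) := by
    funext x; exact hE _
  have hfuny : (fun y : ℝ => E ((w.re:ℂ) + (y:ℂ) * Complex.I)) =
      (fun y : ℝ => ((K ((((w.re:ℂ) + (y:ℂ) * Complex.I) - (z₀:ℂ)).arg)) : ℂ)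
          * R (((w.re:ℂ) + (y:ℂ) * Complex.I).re) * ((δ ((w.re:ℂ) + (y:ℂ) * Complex.I)) ^ 2)⁻¹
        + (1 - ((K ((((w.re:ℂ) + (y:ℂ) * Complex.I) - (z₀:ℂ)).arg)) : ℂ)) * R z₀ * (δ₀ ^ 2)⁻¹ *
            (((w.re:ℂ) + (y:ℂ) * Complex.I) - (z₀:ℂ)) ^ μ) := by
    funext y; exact hE _
  show (deriv (fun x : ℝ => E ((x:ℂ) + w.im * Complex.I)) w.re
      + Complex.I * deriv (fun y : ℝ => E ((w.re:ℂ) + (y:ℂ) * Complex.I)) w.im) / 2 = _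
  rw [hfunx, hfuny, hSlice1.deriv, hSlice2.deriv]
  push_cast
  have hI2 := Complex.I_sq
  linear_combination (((K θ : ℝ) : ℂ) * R w.re * d₁
    + (1 - ((K θ : ℝ) : ℂ)) * R z₀ * (δ₀^2)⁻¹ * d₂) / 2 * hI2


set_option maxHeartbeats 2000000 in
/-- Bound on the `∂̄`-derivative of the lens-opening extension `E`. -/
theorem dbar_extension_estimate (α z₀ η₀ : ℝ) (hα : 0 < α) (hα' : α < Real.pi / 2)
    (Ω : Set ℂ)
    (hΩ : Ω = {w : ℂ | 0 < (w - (z₀ : ℂ)).arg ∧ (w - (z₀ : ℂ)).arg < α})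
    (K : ℝ → ℝ) (hK : ContDiff ℝ 1 K) (hK0 : K 0 = 1) (hKα : K α = 0)
    (hK01 : ∀ x ∈ Set.Icc (0:ℝ) α, K x ∈ Set.Icc (0:ℝ) 1)
    (R : ℝ → ℂ) (hR : ContDiff ℝ 1 R) (hRb : ∃ M, ∀ x, ‖R x‖ ≤ M)
    (hR2 : MemLp (deriv R) 2 volume)
    (δ : ℂ → ℂ) (hδ : DifferentiableOn ℂ δ Ω)
    (δ₀ : ℂ) (hδ₀ : δ₀ ≠ 0) (C₁ C₂ : ℝ) (hC₁ : 0 < C₁) (hC₂ : 0 < C₂)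
    (h1 : ∀ w ∈ Ω, ‖δ w‖ ≤ C₁)
    (h2 : ∀ w ∈ Ω, ‖(δ w)⁻¹‖ ≤ C₁)
    (h3 : ∀ w ∈ Ω, ‖δ₀ * (w - (z₀ : ℂ)) ^ (Complex.I * (η₀ : ℂ))‖ ≤ C₁)
    (h4 : ∀ w ∈ Ω, ‖δ₀⁻¹ * (w - (z₀ : ℂ)) ^ (-(Complex.I * (η₀ : ℂ)))‖ ≤ C₁)
    (h5 : ∀ w ∈ Ω, ‖δ w - δ₀ * (w - (z₀ : ℂ)) ^ (Complex.I * (η₀ : ℂ))‖ ≤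
        C₂ * ‖w - (z₀ : ℂ)‖ ^ ((1:ℝ)/2))
    (E : ℂ → ℂ)
    (hE : ∀ w, E w =
      (K ((w - (z₀ : ℂ)).arg) : ℂ) * R w.re * ((δ w) ^ 2)⁻¹
        + (1 - (K ((w - (z₀ : ℂ)).arg) : ℂ)) * R z₀ * (δ₀ ^ 2)⁻¹ *
            (w - (z₀ : ℂ)) ^ (-(2 * Complex.I * (η₀ : ℂ)))) :
    ∃ C > (0:ℝ), ∀ w ∈ Ω,
      ‖dbar E w‖ ≤ C * (‖w - (z₀ : ℂ)‖ ^ (-(1:ℝ)/2) + ‖deriv R w.re‖) := by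
  subst hΩ
  obtain ⟨M0, hM0⟩ := hRb
  have hM00 : 0 ≤ M0 := le_trans (norm_nonneg _) (hM0 0)
  set N₂ : ℝ := (eLpNorm (deriv R) 2 volume).toReal with hN₂def
  have hN₂0 : 0 ≤ N₂ := ENNReal.toReal_nonneg
  obtain ⟨MK, hMK⟩ : ∃ MK, ∀ t ∈ Set.Icc (0:ℝ) α, |deriv K t| ≤ MK := by
    obtain ⟨MK, hMK⟩ := (isCompact_Icc (a := (0:ℝ)) (b := α)).exists_bound_of_continuousOn
      ((hK.continuous_deriv le_rfl).continuousOn)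
    exact ⟨MK, fun t ht => by simpa [Real.norm_eq_abs] using hMK t ht⟩
  have hMK0 : 0 ≤ MK := le_trans (abs_nonneg _) (hMK 0 ⟨le_rfl, hα.le⟩)
  have hδne := my_delta_ne_zero α z₀ η₀ hα hα' δ δ₀ hδ₀ C₁ C₂ hC₁ hC₂ hδ h2 h4 h5
  set CG : ℝ := C₁^2 * N₂ + M0 * (2 * C₁^5 * C₂) with hCGdef
  have hCG0 : 0 ≤ CG := by positivity
  refine ⟨max (MK * CG) (C₁^2) + 1, by positivity, ?_⟩
  intro w hw
  obtain ⟨hre', him', hp0⟩ := my_sector_facts hα hα' hw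
  have hre : 0 < w.re - z₀ := by simpa using hre'
  set p : ℂ := w - (z₀:ℂ) with hpdef
  set N : ℝ := ‖p‖ with hNdef
  have hNpos : 0 < N := by rw [hNdef]; exact norm_pos_iff.mpr hp0
  have hform := my_dbar_formula z₀ η₀ K hK R hR δ δ₀ E hE w hre
    (hδ.differentiableAt ((my_sector_open z₀ α hα hα').mem_nhds hw)) (hδne w hw)
  -- set up names
  set μ : ℂ := -(2 * Complex.I * (η₀ : ℂ)) with hμdef
  set θ : ℝ := (w - (z₀:ℂ)).arg with hθdef
  have hθmem : θ ∈ Set.Icc (0:ℝ) α := ⟨le_of_lt hw.1, le_of_lt hw.2⟩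
  -- squared norm
  have hrp2 : (w.re - z₀)^2 + w.im^2 = N^2 := by
    rw [hNdef, hpdef, Complex.sq_norm]
    simp [Complex.normSq_apply]
    ring
  -- norm of the numerator direction
  have hdir : (-(w.im:ℂ) + Complex.I * ((w.re:ℂ) - (z₀:ℂ))) = Complex.I * p := by
    rw [hpdef]; apply Complex.ext <;> simp
  -- cpow relations
  set A : ℂ := p ^ (Complex.I * (η₀:ℂ)) with hAdef
  set B : ℂ := p ^ (-(Complex.I * (η₀:ℂ))) with hBdef
  have hA0 : A ≠ 0 := by
    rw [hAdef]; simp [Complex.cpow_eq_zero_iff, hp0]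
  have hAB : A * B = 1 := by
    rw [hAdef, hBdef, Complex.cpow_neg]
    exact mul_inv_cancel₀ hA0
  have hBB : B * B = p ^ μ := by
    rw [hBdef, hμdef, ← Complex.cpow_add _ _ hp0]
    congr 1; ring
  have hdinv : (δ w)⁻¹ * δ w = 1 := inv_mul_cancel₀ (hδne w hw)
  have hd0inv : δ₀⁻¹ * δ₀ = 1 := inv_mul_cancel₀ hδ₀
  -- key factorization
  have key : ((δ w)^2)⁻¹ - (δ₀^2)⁻¹ * p ^ μ
      = ((δ w)⁻¹)^2 * (δ₀⁻¹ * B)^2 * ((δ₀ * A - δ w) * (δ₀ * A + δ w)) := by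
    rw [← hBB, ← inv_pow, ← inv_pow]
    linear_combination (((δ w)⁻¹)^2 * (-((δ₀⁻¹*δ₀)^2 * (A*B+1)))) * hAB
      + (((δ w)⁻¹)^2 * (-(δ₀⁻¹*δ₀+1))) * hd0inv
      + ((δ₀⁻¹*B)^2 * ((δ w)⁻¹*(δ w)+1)) * hdinv
  -- bound on the difference of inverse squares
  have hqdiff : ‖((δ w)^2)⁻¹ - (δ₀^2)⁻¹ * p ^ μ‖ ≤ 2 * C₁^5 * C₂ * N ^ ((1:ℝ)/2) := by
    rw [key, norm_mul, norm_mul]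
    have e1 : ‖((δ w)⁻¹)^2‖ ≤ C₁^2 := by
      rw [norm_pow]; exact pow_le_pow_left₀ (norm_nonneg _) (h2 w hw) 2
    have e2 : ‖(δ₀⁻¹ * B)^2‖ ≤ C₁^2 := by
      rw [norm_pow]; exact pow_le_pow_left₀ (norm_nonneg _) (h4 w hw) 2
    have e3 : ‖δ₀ * A - δ w‖ ≤ C₂ * N ^ ((1:ℝ)/2) := by
      rw [← norm_neg]
      simpa [neg_sub] using h5 w hw
    have e4 : ‖δ₀ * A + δ w‖ ≤ C₁ + C₁ :=
      le_trans (norm_add_le _ _) (add_le_add (h3 w hw) (h1 w hw))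
    calc ‖((δ w)⁻¹)^2‖ * ‖(δ₀⁻¹ * B)^2‖ * ‖(δ₀ * A - δ w) * (δ₀ * A + δ w)‖
        ≤ C₁^2 * C₁^2 * ((C₂ * N ^ ((1:ℝ)/2)) * (C₁ + C₁)) := by
          rw [norm_mul]
          exact mul_le_mul (mul_le_mul e1 e2 (norm_nonneg _) (by positivity))
            (mul_le_mul e3 e4 (norm_nonneg _) (by positivity)) (by positivity) (by positivity)
      _ = 2 * C₁^5 * C₂ * N ^ ((1:ℝ)/2) := by ring
  -- R difference bound
  have hRdiff : ‖R w.re - R z₀‖ ≤ N₂ * N ^ ((1:ℝ)/2) := by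
    have h := my_holder hR hR2 (show z₀ ≤ w.re by linarith)
    refine h.trans ?_
    apply mul_le_mul_of_nonneg_left _ hN₂0
    apply Real.rpow_le_rpow (by linarith) _ (by norm_num)
    have h' : (w - (z₀:ℂ)).re ≤ ‖(w - (z₀:ℂ))‖ := Complex.re_le_norm _
    rw [hNdef, hpdef]
    simpa using h'
  -- G bound
  have hG : ‖R w.re * ((δ w)^2)⁻¹ - R z₀ * (δ₀^2)⁻¹ * p ^ μ‖ ≤ CG * N ^ ((1:ℝ)/2) := by
    have hsplit : R w.re * ((δ w)^2)⁻¹ - R z₀ * (δ₀^2)⁻¹ * p ^ μ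
        = (R w.re - R z₀) * ((δ w)^2)⁻¹
          + R z₀ * (((δ w)^2)⁻¹ - (δ₀^2)⁻¹ * p ^ μ) := by ring
    rw [hsplit]
    have e1 : ‖((δ w)^2)⁻¹‖ ≤ C₁^2 := by
      rw [← inv_pow, norm_pow]; exact pow_le_pow_left₀ (norm_nonneg _) (h2 w hw) 2
    calc ‖(R w.re - R z₀) * ((δ w)^2)⁻¹
          + R z₀ * (((δ w)^2)⁻¹ - (δ₀^2)⁻¹ * p ^ μ)‖
        ≤ ‖(R w.re - R z₀) * ((δ w)^2)⁻¹‖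
          + ‖R z₀ * (((δ w)^2)⁻¹ - (δ₀^2)⁻¹ * p ^ μ)‖ := norm_add_le _ _
      _ ≤ (N₂ * N ^ ((1:ℝ)/2)) * C₁^2 + M0 * (2 * C₁^5 * C₂ * N ^ ((1:ℝ)/2)) := by
          rw [norm_mul, norm_mul]
          exact add_le_add (mul_le_mul hRdiff e1 (norm_nonneg _) (by positivity))
            (mul_le_mul (hM0 z₀) hqdiff (norm_nonneg _) hM00)
      _ = CG * N ^ ((1:ℝ)/2) := by rw [hCGdef]; ring
  -- sqrt facts
  set s : ℝ := Real.sqrt N with hsdef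
  have hs0 : 0 < s := Real.sqrt_pos.mpr hNpos
  have hss : s * s = N := Real.mul_self_sqrt hNpos.le
  have hhalf : N ^ ((1:ℝ)/2) = s := by
    rw [hsdef, Real.sqrt_eq_rpow]
  have hneg : N ^ (-(1:ℝ)/2) = s⁻¹ := by
    rw [show (-(1:ℝ)/2) = -((1:ℝ)/2) by norm_num, Real.rpow_neg hNpos.le, hhalf]
  have hcollapse : N / N^2 * s = s⁻¹ := by
    rw [← hss]
    field_simp
  -- direction norm
  have hT1dir : ‖(-(w.im:ℂ) + Complex.I * ((w.re:ℂ) - (z₀:ℂ)))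
      / (((w.re - z₀)^2 + w.im^2 : ℝ) : ℂ)‖ = N / N^2 := by
    rw [norm_div, hdir, norm_mul, Complex.norm_I, one_mul, hrp2]
    rw [Complex.norm_real, Real.norm_of_nonneg (by positivity)]
  have hKdb : |deriv K θ| ≤ MK := hMK θ hθmem
  have hKb : |K θ| ≤ 1 := by
    have h := hK01 θ hθmem
    rw [abs_le]; exact ⟨by linarith [h.1], h.2⟩
  -- bound T1
  have hT1 : ‖((deriv K θ : ℝ) : ℂ)
      * ((-(w.im:ℂ) + Complex.I * ((w.re:ℂ) - (z₀:ℂ))) / (((w.re - z₀)^2 + w.im^2 : ℝ) : ℂ))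
      * (R w.re * ((δ w) ^ 2)⁻¹ - R z₀ * (δ₀ ^ 2)⁻¹ * p ^ μ)‖ ≤ MK * CG * s⁻¹ := by
    rw [norm_mul, norm_mul, hT1dir, Complex.norm_real, Real.norm_eq_abs]
    calc |deriv K θ| * (N / N^2) * ‖R w.re * ((δ w) ^ 2)⁻¹ - R z₀ * (δ₀ ^ 2)⁻¹ * p ^ μ‖
        ≤ MK * (N / N^2) * (CG * N ^ ((1:ℝ)/2)) := by
          exact mul_le_mul (mul_le_mul_of_nonneg_right hKdb (by positivity)) hG
            (norm_nonneg _) (by positivity)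
      _ = MK * CG * (N / N^2 * s) := by rw [hhalf]; ring
      _ = MK * CG * s⁻¹ := by rw [hcollapse]
  -- bound T2
  have hT2 : ‖((K θ : ℝ) : ℂ) * deriv R w.re * ((δ w) ^ 2)⁻¹‖
      ≤ C₁^2 * ‖deriv R w.re‖ := by
    rw [norm_mul, norm_mul, Complex.norm_real, Real.norm_eq_abs]
    have e1 : ‖((δ w)^2)⁻¹‖ ≤ C₁^2 := by
      rw [← inv_pow, norm_pow]; exact pow_le_pow_left₀ (norm_nonneg _) (h2 w hw) 2
    calc |K θ| * ‖deriv R w.re‖ * ‖((δ w)^2)⁻¹‖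
        ≤ 1 * ‖deriv R w.re‖ * C₁^2 := by
          exact mul_le_mul (mul_le_mul_of_nonneg_right hKb (norm_nonneg _)) e1
            (norm_nonneg _) (by positivity)
      _ = C₁^2 * ‖deriv R w.re‖ := by ring
  rw [hform, hneg]
  calc ‖(((deriv K θ : ℝ) : ℂ)
        * ((-(w.im:ℂ) + Complex.I * ((w.re:ℂ) - (z₀:ℂ))) / (((w.re - z₀)^2 + w.im^2 : ℝ) : ℂ))
        * (R w.re * ((δ w) ^ 2)⁻¹ - R z₀ * (δ₀ ^ 2)⁻¹ * p ^ μ)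
      + ((K θ : ℝ) : ℂ) * deriv R w.re * ((δ w) ^ 2)⁻¹) / 2‖
      ≤ (‖((deriv K θ : ℝ) : ℂ)
        * ((-(w.im:ℂ) + Complex.I * ((w.re:ℂ) - (z₀:ℂ))) / (((w.re - z₀)^2 + w.im^2 : ℝ) : ℂ))
        * (R w.re * ((δ w) ^ 2)⁻¹ - R z₀ * (δ₀ ^ 2)⁻¹ * p ^ μ)‖
        + ‖((K θ : ℝ) : ℂ) * deriv R w.re * ((δ w) ^ 2)⁻¹‖) / 2 := by
        rw [norm_div]
        have h2n : ‖(2:ℂ)‖ = 2 := by norm_num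
        rw [h2n]
        gcongr
        exact norm_add_le _ _
    _ ≤ (MK * CG * s⁻¹ + C₁^2 * ‖deriv R w.re‖) / 2 := by
        gcongr
    _ ≤ (max (MK * CG) (C₁^2) + 1) * (s⁻¹ + ‖deriv R w.re‖) := by
        have l1 : MK * CG ≤ max (MK * CG) (C₁^2) + 1 :=
          le_trans (le_max_left _ _) (by linarith)
        have l2 : C₁^2 ≤ max (MK * CG) (C₁^2) + 1 :=
          le_trans (le_max_right _ _) (by linarith)
        have hsinv : 0 ≤ s⁻¹ := by positivity
        have hrn : 0 ≤ ‖deriv R w.re‖ := norm_nonneg _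
        nlinarith [mul_le_mul_of_nonneg_right l1 hsinv, mul_le_mul_of_nonneg_right l2 hrn]
end

section
/- Let D \subseteq \mathbb{R} be measurable, let \eta : \mathbb{R} \to \mathbb{R} be integrable and essentially bounded, and let z \in \mathbb{C} \setminus \mathbb{R}. Then the integral w = \int_D \frac{\eta(s)}{s - z}\, ds converges absolutely and e^{-\pi \|\eta\|_{L^\infty}} \le |\exp(i w)| \le e^{\pi \|\eta\|_{L^\infty}}. -/
open MeasureTheory
open scoped ENNReal

lemma poisson_rw (x y : ℝ) (hy : y ≠ 0) (s : ℝ) :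
    |y| / ((s - x) ^ 2 + y ^ 2) = |y|⁻¹ * (1 + ((s - x) / |y|) ^ 2)⁻¹ := by
  have h1 : |y| ≠ 0 := abs_ne_zero.mpr hy
  have h2 : (s - x) ^ 2 + y ^ 2 ≠ 0 := by positivity
  have h3 : |y| ^ 2 = y ^ 2 := sq_abs y
  field_simp
  nlinarith [sq_abs y]

lemma poisson_integrable (x y : ℝ) (hy : y ≠ 0) :
    Integrable (fun s : ℝ => |y| / ((s - x) ^ 2 + y ^ 2)) := by
  have h1 : |y| ≠ 0 := abs_ne_zero.mpr hy
  have : Integrable (fun s : ℝ => |y|⁻¹ * (1 + ((s - x) / |y|) ^ 2)⁻¹) := by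
    exact ((integrable_inv_one_add_sq.comp_div h1).comp_sub_right x).const_mul _
  exact this.congr (Filter.Eventually.of_forall fun s => (poisson_rw x y hy s).symm)

lemma poisson_integral (x y : ℝ) (hy : y ≠ 0) :
    ∫ s : ℝ, |y| / ((s - x) ^ 2 + y ^ 2) = Real.pi := by
  have h1 : |y| ≠ 0 := abs_ne_zero.mpr hy
  calc ∫ s : ℝ, |y| / ((s - x) ^ 2 + y ^ 2)
      = ∫ s : ℝ, |y|⁻¹ * (1 + ((s - x) / |y|) ^ 2)⁻¹ := by
        exact integral_congr_ae (Filter.Eventually.of_forall fun s => poisson_rw x y hy s)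
    _ = |y|⁻¹ * ∫ s : ℝ, (1 + ((s - x) / |y|) ^ 2)⁻¹ := integral_const_mul _ _
    _ = |y|⁻¹ * ∫ s : ℝ, (1 + (s / |y|) ^ 2)⁻¹ := by
        rw [integral_sub_right_eq_self (fun s : ℝ => (1 + (s / |y|) ^ 2)⁻¹) x]
    _ = |y|⁻¹ * (|(|y|)| • ∫ s : ℝ, (1 + s ^ 2)⁻¹) := by
        rw [MeasureTheory.Measure.integral_comp_div (fun s : ℝ => (1 + s ^ 2)⁻¹) |y|]
    _ = Real.pi := by
        rw [integral_univ_inv_one_add_sq, abs_abs, smul_eq_mul]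
        field_simp

/-- Uniform boundedness of `δ(z)` and `δ(z)⁻¹`: for `η` integrable and
essentially bounded and `z` off the real line, the Cauchy integral
`w = ∫_D η(s)/(s - z) ds` converges absolutely and
`e^{-π‖η‖_∞} ≤ |exp(i w)| ≤ e^{π‖η‖_∞}`. -/
theorem delta_bounded (D : Set ℝ) (hD : MeasurableSet D) (η : ℝ → ℝ)
    (hη : Integrable η) (hb : MemLp η ⊤ volume)
    (z : ℂ) (hz : z.im ≠ 0) :
    IntegrableOn (fun s : ℝ => (η s : ℂ) / ((s : ℂ) - z)) D ∧
    Real.exp (-(Real.pi * (eLpNorm η ⊤ volume).toReal)) ≤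
        ‖Complex.exp (Complex.I * ∫ s in D, (η s : ℂ) / ((s : ℂ) - z))‖ ∧
      ‖Complex.exp (Complex.I * ∫ s in D, (η s : ℂ) / ((s : ℂ) - z))‖ ≤
        Real.exp (Real.pi * (eLpNorm η ⊤ volume).toReal) := by
  set M := (eLpNorm η ⊤ volume).toReal with hM
  have hM0 : 0 ≤ M := ENNReal.toReal_nonneg
  have hy : (0 : ℝ) < |z.im| := abs_pos.mpr hz
  -- a.e. bound on η
  have hηM : ∀ᵐ s : ℝ, |η s| ≤ M := by
    have hfin : eLpNormEssSup η volume ≠ ⊤ := by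
      have h := hb.eLpNorm_lt_top
      rw [eLpNorm_exponent_top] at h
      exact h.ne
    filter_upwards [ae_le_eLpNormEssSup (f := η) (μ := volume)] with s hs
    have h2 : ((‖η s‖₊ : ℝ≥0∞)).toReal ≤ M := by
      rw [hM, eLpNorm_exponent_top]
      exact ENNReal.toReal_mono hfin hs
    simpa [Real.norm_eq_abs] using h2
  -- lower bound on denominator
  have hden : ∀ s : ℝ, |z.im| ≤ ‖(s : ℂ) - z‖ := by
    intro s
    have : |((s : ℂ) - z).im| ≤ ‖(s : ℂ) - z‖ := Complex.abs_im_le_norm _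
    simpa using this
  -- integrability
  have hmeas : AEStronglyMeasurable (fun s : ℝ => (η s : ℂ) / ((s : ℂ) - z))
      (volume.restrict D) := by
    have h1 : AEStronglyMeasurable (fun s : ℝ => (η s : ℂ)) (volume.restrict D) :=
      (Complex.continuous_ofReal.comp_aestronglyMeasurable hη.aestronglyMeasurable).restrict
    have h2 : AEStronglyMeasurable (fun s : ℝ => ((s : ℂ) - z)⁻¹) (volume.restrict D) :=
      ((Complex.continuous_ofReal.sub continuous_const).measurable.inv).aestronglyMeasurable.restrict
    simpa only [div_eq_mul_inv, Pi.mul_def] using h1.mul h2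
  have hint : IntegrableOn (fun s : ℝ => (η s : ℂ) / ((s : ℂ) - z)) D := by
    refine Integrable.mono' ((hη.norm.div_const |z.im|).integrableOn) hmeas ?_
    filter_upwards with s
    rw [norm_div]
    have h1 : ‖(η s : ℂ)‖ = ‖η s‖ := by simp [Complex.norm_real]
    rw [h1]
    exact div_le_div_of_nonneg_left (norm_nonneg _) hy (hden s)
  refine ⟨hint, ?_⟩
  -- the imaginary part bound
  set w := ∫ s in D, (η s : ℂ) / ((s : ℂ) - z) with hw
  have him : w.im = ∫ s in D, ((η s : ℂ) / ((s : ℂ) - z)).im :=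
    (integral_im hint).symm
  -- pointwise formula for the imaginary part
  have himpt : ∀ s : ℝ, ((η s : ℂ) / ((s : ℂ) - z)).im
      = η s * z.im / ((s - z.re) ^ 2 + z.im ^ 2) := by
    intro s
    rw [Complex.div_im]
    simp [Complex.normSq_apply]
    ring
  set g : ℝ → ℝ := fun s => M * (|z.im| / ((s - z.re) ^ 2 + z.im ^ 2)) with hg
  have hgint : Integrable g := (poisson_integrable z.re z.im hz).const_mul M
  have hgval : ∫ s : ℝ, g s = M * Real.pi := by
    rw [hg, integral_const_mul, poisson_integral z.re z.im hz]
  have hwim : |w.im| ≤ M * Real.pi := by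
    rw [him]
    calc |∫ s in D, ((η s : ℂ) / ((s : ℂ) - z)).im|
        ≤ ∫ s in D, |((η s : ℂ) / ((s : ℂ) - z)).im| := by
          simpa [Real.norm_eq_abs] using
            norm_integral_le_integral_norm (fun s => ((η s : ℂ) / ((s : ℂ) - z)).im) (μ := volume.restrict D)
      _ ≤ ∫ s in D, g s := by
          refine integral_mono_ae hint.im.abs hgint.integrableOn ?_
          refine ae_restrict_of_ae ?_
          filter_upwards [hηM] with s hs
          show |((η s : ℂ) / ((s : ℂ) - z)).im| ≤ M * (|z.im| / ((s - z.re) ^ 2 + z.im ^ 2))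
          rw [himpt s]
          have hpos : (0 : ℝ) < (s - z.re) ^ 2 + z.im ^ 2 := by positivity
          rw [abs_div, abs_of_pos hpos, abs_mul, mul_div_assoc]
          exact mul_le_mul_of_nonneg_right hs (by positivity)
      _ ≤ ∫ s : ℝ, g s := by
          refine setIntegral_le_integral hgint ?_
          filter_upwards with s
          rw [hg]
          positivity
      _ = M * Real.pi := hgval
  -- conclude
  have hnorm : ‖Complex.exp (Complex.I * w)‖ = Real.exp (-w.im) := by
    rw [Complex.norm_exp]
    congr 1
    simp [Complex.mul_re]
  rw [hnorm]
  have h1 : -(Real.pi * M) ≤ -w.im := by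
    rw [neg_le_neg_iff]
    calc w.im ≤ |w.im| := le_abs_self _
      _ ≤ M * Real.pi := hwim
      _ = Real.pi * M := mul_comm _ _
  have h2 : -w.im ≤ Real.pi * M := by
    calc -w.im ≤ |w.im| := neg_le_abs w.im
      _ ≤ M * Real.pi := hwim
      _ = Real.pi * M := mul_comm _ _
  exact ⟨Real.exp_le_exp.mpr h1, Real.exp_le_exp.mpr h2⟩
end

section
/- For every t > 0, \int_0^\infty \int_0^u (u^2 + v^2)^{-1/4}\, e^{-t u v}\, dv\, du \le 2\, \Gamma(3/4)\, t^{-3/4}. -/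
open MeasureTheory Set Real Filter

noncomputable def secF (t u : ℝ) : ℝ := u ^ (-(1:ℝ)/2) * (1 - Real.exp (-(t*u*u)))

noncomputable def secF' (t u : ℝ) : ℝ :=
  (-(1:ℝ)/2 * u ^ (-(1:ℝ)/2 - 1)) * (1 - Real.exp (-(t*u*u)))
    + u ^ (-(1:ℝ)/2) * (2*t*u * Real.exp (-(t*u*u)))

noncomputable def secf (t u : ℝ) : ℝ := u ^ (-(1:ℝ)/2) * ((1 - Real.exp (-(t*u*u))) / (t*u))

noncomputable def seck (t u : ℝ) : ℝ := u ^ ((1:ℝ)/2) * Real.exp (-t * u ^ 2)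

lemma one_sub_exp_neg_le (x : ℝ) : 1 - Real.exp (-x) ≤ x := by
  have := Real.add_one_le_exp (-x)
  linarith

lemma one_sub_exp_neg_nonneg {x : ℝ} (hx : 0 ≤ x) : 0 ≤ 1 - Real.exp (-x) := by
  have : Real.exp (-x) ≤ Real.exp 0 := Real.exp_le_exp.2 (by linarith)
  simp only [Real.exp_zero] at this
  linarith

lemma secF_hasDerivAt (t : ℝ) {u : ℝ} (hu : 0 < u) :
    HasDerivAt (secF t) (secF' t u) u := by
  have h1 : HasDerivAt (fun x : ℝ => x ^ (-(1:ℝ)/2)) (-(1:ℝ)/2 * u ^ (-(1:ℝ)/2 - 1)) u :=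
    Real.hasDerivAt_rpow_const (Or.inl hu.ne')
  have h2 : HasDerivAt (fun x : ℝ => -(t*x*x)) (-(2*t*u)) u := by
    have := (((hasDerivAt_id u).const_mul t).mul (hasDerivAt_id u)).neg
    exact this.congr_deriv (by simp; ring)
  have h3 := h2.exp
  have h4 := (hasDerivAt_const u (1:ℝ)).sub h3
  have h5 := h1.mul h4
  exact h5.congr_deriv (by simp only [secF', Pi.sub_apply]; ring)

lemma sec_id1 {t : ℝ} (ht : 0 < t) {u : ℝ} (hu : 0 < u) :
    secf t u = (-2/t) * secF' t u + 4 * seck t u := by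
  simp only [secf, secF', seck]
  have e1 : u ^ (-(1:ℝ)/2 - 1) = u ^ (-(1:ℝ)/2) / u := by
    rw [Real.rpow_sub hu, Real.rpow_one]
  have e2 : u ^ ((1:ℝ)/2) = u ^ (-(1:ℝ)/2) * u := by
    rw [show ((1:ℝ)/2) = -(1:ℝ)/2 + 1 by norm_num, Real.rpow_add hu, Real.rpow_one]
  have e3 : (-t * u^2 : ℝ) = -(t*u*u) := by ring
  rw [e1, e2, e3]
  field_simp
  ring

lemma sec_id2 {t : ℝ} (ht : 0 < t) {u : ℝ} (hu : 0 < u) :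
    secF' t u = (-t/2) * secf t u + (2*t) * seck t u := by
  have := sec_id1 ht hu
  have ht' : t ≠ 0 := ht.ne'
  field_simp at this ⊢
  linarith

lemma seck_integrableOn {t : ℝ} (ht : 0 < t) : IntegrableOn (seck t) (Ioi 0) := by
  unfold seck
  exact integrableOn_rpow_mul_exp_neg_mul_sq ht (by norm_num : (-1:ℝ) < 1/2)

lemma secf_nonneg {t : ℝ} (ht : 0 < t) {u : ℝ} (hu : 0 ≤ u) : 0 ≤ secf t u := by
  have h1 : 0 ≤ 1 - Real.exp (-(t*u*u)) := one_sub_exp_neg_nonneg (by positivity)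
  exact mul_nonneg (Real.rpow_nonneg hu _) (div_nonneg h1 (by positivity))

lemma secf_contOn {t : ℝ} (ht : 0 < t) : ContinuousOn (secf t) (Ioi 0) := by
  apply ContinuousOn.mul
  · exact continuousOn_id.rpow_const (fun x hx => Or.inl (ne_of_gt hx))
  · apply ContinuousOn.div
    · exact (Continuous.sub continuous_const
        (Real.continuous_exp.comp (by continuity))).continuousOn
    · exact (continuous_const.mul continuous_id).continuousOn
    · intro x hx
      exact ne_of_gt (mul_pos ht hx)

lemma secf_le_small {t : ℝ} (ht : 0 < t) {u : ℝ} (hu : 0 < u) :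
    secf t u ≤ u ^ ((1:ℝ)/2) := by
  simp only [secf]
  have e2 : u ^ ((1:ℝ)/2) = u ^ (-(1:ℝ)/2) * u := by
    rw [show ((1:ℝ)/2) = -(1:ℝ)/2 + 1 by norm_num, Real.rpow_add hu, Real.rpow_one]
  rw [e2]
  apply mul_le_mul_of_nonneg_left _ (Real.rpow_nonneg hu.le _)
  rw [div_le_iff₀ (mul_pos ht hu)]
  calc 1 - Real.exp (-(t*u*u)) ≤ t*u*u := one_sub_exp_neg_le _
    _ = u * (t*u) := by ring

lemma secf_le_big {t : ℝ} (ht : 0 < t) {u : ℝ} (hu : 0 < u) :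
    secf t u ≤ (1/t) * u ^ (-(3:ℝ)/2) := by
  simp only [secf]
  have e2 : (1/t) * u ^ (-(3:ℝ)/2) = u ^ (-(1:ℝ)/2) * (1 / (t*u)) := by
    rw [show (-(3:ℝ)/2) = -(1:ℝ)/2 + (-1) by norm_num, Real.rpow_add hu, Real.rpow_neg_one]
    field_simp
  rw [e2]
  apply mul_le_mul_of_nonneg_left _ (Real.rpow_nonneg hu.le _)
  gcongr
  have := (Real.exp_pos (-(t*u*u))).le
  linarith

lemma secf_integrableOn {t : ℝ} (ht : 0 < t) : IntegrableOn (secf t) (Ioi 0) := by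
  have hmeas : ∀ s ⊆ Ioi (0:ℝ), MeasurableSet s → AEStronglyMeasurable (secf t) (volume.restrict s) :=
    fun s hs hsm => ((secf_contOn ht).mono hs).aestronglyMeasurable hsm
  rw [← Set.Ioc_union_Ioi_eq_Ioi (zero_le_one' ℝ)]
  apply IntegrableOn.union
  · apply Integrable.mono' (g := fun u => u ^ ((1:ℝ)/2))
    · exact (intervalIntegral.intervalIntegrable_rpow' (by norm_num)).1
    · exact hmeas _ Ioc_subset_Ioi_self measurableSet_Ioc
    · filter_upwards [ae_restrict_mem measurableSet_Ioc] with u hu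
      rw [Real.norm_eq_abs, abs_of_nonneg (secf_nonneg ht hu.1.le)]
      exact secf_le_small ht hu.1
  · apply Integrable.mono' (g := fun u => (1/t) * u ^ (-(3:ℝ)/2))
    · exact (integrableOn_Ioi_rpow_of_lt (by norm_num) one_pos).const_mul _
    · exact hmeas _ (Ioi_subset_Ioi zero_le_one) measurableSet_Ioi
    · filter_upwards [ae_restrict_mem measurableSet_Ioi] with u hu
      have hu0 : (0:ℝ) < u := lt_trans one_pos hu
      rw [Real.norm_eq_abs, abs_of_nonneg (secf_nonneg ht hu0.le)]
      exact secf_le_big ht hu0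

lemma seck_integral {t : ℝ} (ht : 0 < t) :
    ∫ u in Ioi (0:ℝ), seck t u = 1/2 * ((1/t) ^ ((3:ℝ)/4) * Real.Gamma (3/4)) := by
  have h := integral_comp_rpow_Ioi_of_pos
    (g := fun y : ℝ => (1/2 : ℝ) * (y ^ ((3:ℝ)/4 - 1) * Real.exp (-(t*y)))) (p := 2) two_pos
  have hL : ∀ x ∈ Ioi (0:ℝ),
      ((2:ℝ) * x ^ ((2:ℝ) - 1)) • ((1/2 : ℝ) * ((x ^ (2:ℝ)) ^ ((3:ℝ)/4 - 1)
        * Real.exp (-(t * x ^ (2:ℝ))))) = seck t x := by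
    intro x hx
    have hx0 : (0:ℝ) < x := hx
    have h2 : x ^ (2:ℝ) = x ^ (2:ℕ) := by
      rw [← Real.rpow_natCast x 2]; norm_num
    have h3 : (x ^ (2:ℝ)) ^ ((3:ℝ)/4 - 1) = x ^ (-(1:ℝ)/2) := by
      rw [← Real.rpow_mul hx0.le]; norm_num
    have h4 : x ^ ((2:ℝ) - 1) = x := by
      norm_num
    have h5 : x * x ^ (-(1:ℝ)/2) = x ^ ((1:ℝ)/2) := by
      rw [show ((1:ℝ)/2) = 1 + -(1:ℝ)/2 by norm_num, Real.rpow_add hx0, Real.rpow_one]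
    simp only [smul_eq_mul, seck]
    rw [h3, h4, h2, ← h5]
    ring_nf
  rw [show (∫ u in Ioi (0:ℝ), seck t u)
      = ∫ x in Ioi (0:ℝ), ((2:ℝ) * x ^ ((2:ℝ) - 1)) • ((1/2 : ℝ) * ((x ^ (2:ℝ)) ^ ((3:ℝ)/4 - 1)
        * Real.exp (-(t * x ^ (2:ℝ))))) from
    (setIntegral_congr_fun measurableSet_Ioi hL).symm, h]
  rw [MeasureTheory.integral_const_mul, Real.integral_rpow_mul_exp_neg_mul_Ioi (by norm_num) ht]

lemma secF_nonneg {t : ℝ} (ht : 0 < t) {u : ℝ} (hu : 0 ≤ u) : 0 ≤ secF t u :=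
  mul_nonneg (Real.rpow_nonneg hu _) (one_sub_exp_neg_nonneg (by positivity))

lemma secF_zero (t : ℝ) : secF t 0 = 0 := by
  simp [secF]

lemma secF_tendsto_zero {t : ℝ} (ht : 0 < t) :
    Tendsto (secF t) (nhdsWithin 0 (Ici 0)) (nhds 0) := by
  apply squeeze_zero' (g := fun u => t * u ^ ((3:ℝ)/2))
  · filter_upwards [self_mem_nhdsWithin] with u hu
    exact secF_nonneg ht hu
  · filter_upwards [self_mem_nhdsWithin] with u hu
    rcases eq_or_lt_of_le (mem_Ici.1 hu) with h | h
    · rw [← h, secF_zero]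
      rw [show ((0:ℝ) ^ ((3:ℝ)/2)) = 0 from Real.zero_rpow (by norm_num)]
      simp
    · have e2 : t * u ^ ((3:ℝ)/2) = u ^ (-(1:ℝ)/2) * (t * u * u) := by
        rw [show ((3:ℝ)/2) = -(1:ℝ)/2 + 1 + 1 by norm_num, Real.rpow_add h,
          Real.rpow_add h, Real.rpow_one]
        ring
      rw [e2, secF]
      exact mul_le_mul_of_nonneg_left (one_sub_exp_neg_le _) (Real.rpow_nonneg h.le _)
  · have hc : ContinuousAt (fun u : ℝ => u ^ ((3:ℝ)/2)) 0 :=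
      Real.continuousAt_rpow_const 0 _ (Or.inr (by norm_num))
    have := (hc.tendsto.const_mul t).mono_left (nhdsWithin_le_nhds (s := Ici (0:ℝ)))
    simpa [Real.zero_rpow (show ((3:ℝ)/2) ≠ 0 by norm_num)] using this

lemma secF_tendsto_atTop {t : ℝ} (ht : 0 < t) :
    Tendsto (secF t) atTop (nhds 0) := by
  apply squeeze_zero' (g := fun u : ℝ => u ^ (-(1:ℝ)/2))
  · filter_upwards [Ioi_mem_atTop 0] with u hu
    exact secF_nonneg ht (le_of_lt hu)
  · filter_upwards [Ioi_mem_atTop 0] with u hu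
    have h1 : 1 - Real.exp (-(t*u*u)) ≤ 1 := by
      have := (Real.exp_pos (-(t*u*u))).le; linarith
    calc secF t u ≤ u ^ (-(1:ℝ)/2) * 1 :=
          mul_le_mul_of_nonneg_left h1 (Real.rpow_nonneg (le_of_lt hu) _)
      _ = u ^ (-(1:ℝ)/2) := mul_one _
  · have := tendsto_rpow_neg_atTop (show (0:ℝ) < 1/2 by norm_num)
    simpa [neg_div] using this

lemma exp_interval_integral {t u : ℝ} (ht : 0 < t) (hu : 0 < u) :
    ∫ v in (0:ℝ)..u, Real.exp (-(t * u * v)) = (1 - Real.exp (-(t*u*u))) / (t*u) := by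
  have hc : (0:ℝ) < t * u := mul_pos ht hu
  have hderiv : ∀ v : ℝ, HasDerivAt (fun v : ℝ => -(Real.exp (-(t*u*v)))/(t*u))
      (Real.exp (-(t*u*v))) v := by
    intro v
    have h2 : HasDerivAt (fun v : ℝ => -(t*u*v)) (-(t*u)) v := by
      have := ((hasDerivAt_id v).const_mul (t*u)).neg
      exact this.congr_deriv (by ring)
    have h3 := (h2.exp.neg).div_const (t*u)
    exact h3.congr_deriv (by rw [mul_neg, neg_neg, mul_div_assoc, div_self hc.ne', mul_one])
  rw [intervalIntegral.integral_eq_sub_of_hasDerivAt (fun v _ => hderiv v)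
    ((Real.continuous_exp.comp (by continuity)).intervalIntegrable 0 u)]
  field_simp
  simp only [mul_zero, neg_zero, Real.exp_zero]
  ring

lemma inner_bound {t u : ℝ} (ht : 0 < t) (hu : 0 < u) :
    (∫ v in (0:ℝ)..u, (u ^ 2 + v ^ 2) ^ (-(1:ℝ)/4) * Real.exp (-(t * u * v)))
      ≤ secf t u := by
  have hint1 : IntervalIntegrable
      (fun v => (u ^ 2 + v ^ 2) ^ (-(1:ℝ)/4) * Real.exp (-(t * u * v))) volume 0 u := by
    apply Continuous.intervalIntegrable
    apply Continuous.mul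
    · apply Continuous.rpow_const (by continuity)
      intro v
      left
      positivity
    · exact Real.continuous_exp.comp (by continuity)
  have hint2 : IntervalIntegrable
      (fun v => u ^ (-(1:ℝ)/2) * Real.exp (-(t * u * v))) volume 0 u := by
    apply Continuous.intervalIntegrable
    exact continuous_const.mul (Real.continuous_exp.comp (by continuity))
  have hpt : ∀ v ∈ Icc (0:ℝ) u,
      (u ^ 2 + v ^ 2) ^ (-(1:ℝ)/4) * Real.exp (-(t * u * v))
        ≤ u ^ (-(1:ℝ)/2) * Real.exp (-(t * u * v)) := by
    intro v _
    apply mul_le_mul_of_nonneg_right _ (Real.exp_nonneg _)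
    have h4 : ((u:ℝ)^2 : ℝ) ^ (-(1:ℝ)/4) = u ^ (-(1:ℝ)/2) := by
      rw [← Real.rpow_natCast u 2, ← Real.rpow_mul hu.le]
      norm_num
    rw [← h4]
    exact Real.rpow_le_rpow_of_nonpos (by positivity)
      (le_add_of_nonneg_right (sq_nonneg v)) (by norm_num)
  calc (∫ v in (0:ℝ)..u, (u ^ 2 + v ^ 2) ^ (-(1:ℝ)/4) * Real.exp (-(t * u * v)))
      ≤ ∫ v in (0:ℝ)..u, u ^ (-(1:ℝ)/2) * Real.exp (-(t * u * v)) :=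
        intervalIntegral.integral_mono_on hu.le hint1 hint2 hpt
    _ = secf t u := by
        rw [intervalIntegral.integral_const_mul, exp_interval_integral ht hu, secf]

lemma inner_nonneg {t u : ℝ} (hu : 0 < u) :
    0 ≤ ∫ v in (0:ℝ)..u, (u ^ 2 + v ^ 2) ^ (-(1:ℝ)/4) * Real.exp (-(t * u * v)) := by
  apply intervalIntegral.integral_nonneg hu.le
  intro v _
  positivity

theorem sector_double_integral_quarter (t : ℝ) (ht : 0 < t) :
    (∫ u in Set.Ioi (0:ℝ),
        ∫ v in (0:ℝ)..u, (u ^ 2 + v ^ 2) ^ (-(1:ℝ)/4) * Real.exp (-(t * u * v))) ≤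
      2 * Real.Gamma (3/4) * t ^ (-(3:ℝ)/4) := by
  have hfint := secf_integrableOn ht
  have hkint := seck_integrableOn ht
  have step1 : (∫ u in Set.Ioi (0:ℝ),
      ∫ v in (0:ℝ)..u, (u ^ 2 + v ^ 2) ^ (-(1:ℝ)/4) * Real.exp (-(t * u * v)))
        ≤ ∫ u in Ioi (0:ℝ), secf t u := by
    apply integral_mono_of_nonneg
    · rw [EventuallyLE, ae_restrict_iff' measurableSet_Ioi]
      exact ae_of_all _ fun u hu => inner_nonneg hu
    · exact hfint
    · rw [EventuallyLE, ae_restrict_iff' measurableSet_Ioi]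
      exact ae_of_all _ fun u hu => inner_bound ht hu
  have hF'int : IntegrableOn (secF' t) (Ioi 0) := by
    have h0 : IntegrableOn (fun u => (-t/2) * secf t u + (2*t) * seck t u) (Ioi 0) :=
      (hfint.const_mul _).add (hkint.const_mul _)
    exact h0.congr_fun (fun u hu => (sec_id2 ht hu).symm) measurableSet_Ioi
  have hcont : ContinuousWithinAt (secF t) (Ici 0) 0 := by
    rw [ContinuousWithinAt, secF_zero]
    exact secF_tendsto_zero ht
  have hF'zero : ∫ u in Ioi (0:ℝ), secF' t u = 0 := by
    rw [integral_Ioi_of_hasDerivAt_of_tendsto hcont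
      (fun x hx => secF_hasDerivAt t hx) hF'int (secF_tendsto_atTop ht), secF_zero]
    ring
  have step2 : ∫ u in Ioi (0:ℝ), secf t u = 2 * Real.Gamma (3/4) * t ^ (-(3:ℝ)/4) := by
    rw [setIntegral_congr_fun measurableSet_Ioi (fun u hu => sec_id1 ht hu),
      integral_add ((hF'int.const_mul _)) (hkint.const_mul _),
      integral_const_mul, integral_const_mul, hF'zero, seck_integral ht]
    have hpw : (1/t) ^ ((3:ℝ)/4) = t ^ (-(3:ℝ)/4) := by
      rw [one_div, show (-(3:ℝ)/4) = -((3:ℝ)/4) by norm_num, Real.rpow_neg ht.le,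
        ← Real.inv_rpow ht.le]
    rw [hpw]
    ring
  exact step1.trans (le_of_eq step2)
end

section
/- For every t > 0, \int_0^\infty \int_0^u (u^2 + v^2)^{-3/4}\, e^{-t u v}\, dv\, du \le \frac{2}{3}\, \Gamma(1/4)\, t^{-1/4}. -/
open MeasureTheory Set

private lemma expInt (c a : ℝ) (hc : c ≠ 0) :
    ∫ x in (0:ℝ)..a, Real.exp (c * x) = (Real.exp (c * a) - 1) / c := by
  have h : ∀ x : ℝ, HasDerivAt (fun y => Real.exp (c * y) / c) (Real.exp (c * x)) x := by
    intro x
    have h1 : HasDerivAt (fun y : ℝ => c * y) c x := by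
      simpa using (hasDerivAt_id x).const_mul c
    have h2 := (h1.exp).div_const c
    simpa [mul_comm, mul_div_assoc, mul_div_cancel_left₀ _ hc] using h2
  have hcont : Continuous fun x : ℝ => Real.exp (c * x) := by
    exact Real.continuous_exp.comp (continuous_const.mul continuous_id)
  have key := intervalIntegral.integral_eq_sub_of_hasDerivAt (f := fun y => Real.exp (c * y) / c)
    (fun x _ => h x) (hcont.intervalIntegrable 0 a)
  rw [key]
  rw [mul_zero, Real.exp_zero, sub_div]

private lemma gammaInt {b : ℝ} (hb : 0 < b) :
    ∫ u in Ioi (0:ℝ), u ^ (-(1:ℝ)/2) * Real.exp (-b * u ^ 2) =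
      b ^ (-(1:ℝ)/4) * (1/2) * Real.Gamma (1/4) := by
  have h := integral_rpow_mul_exp_neg_mul_rpow (p := 2) (q := -(1:ℝ)/2) (b := b)
    two_pos (by norm_num) hb
  have hcongr : ∀ u : ℝ, u ^ (-(1:ℝ)/2) * Real.exp (-b * u ^ (2:ℝ)) =
      u ^ (-(1:ℝ)/2) * Real.exp (-b * u ^ 2) := by
    intro u
    rw [show (u : ℝ) ^ (2:ℝ) = u ^ (2:ℕ) from Real.rpow_natCast u 2]
  rw [show (-(-(1:ℝ)/2 + 1) / 2) = -(1:ℝ)/4 by norm_num,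
    show ((-(1:ℝ)/2 + 1) / 2) = (1:ℝ)/4 by norm_num] at h
  rw [← h]
  refine setIntegral_congr_fun measurableSet_Ioi (fun u _ => ?_)
  exact (hcongr u).symm

private lemma Jval {t u : ℝ} (ht : 0 < t) (hu : 0 < u) :
    ∫ w in Ioc (0:ℝ) 1, u ^ (-(1:ℝ)/2) * Real.exp (-(t * w) * u ^ 2) =
      u ^ (-(1:ℝ)/2) * ((1 - Real.exp (-(t * u ^ 2))) / (t * u ^ 2)) := by
  have hc : (-(t * u ^ 2)) ≠ 0 := neg_ne_zero.mpr (by positivity)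
  have h1 : ∫ w in Ioc (0:ℝ) 1, Real.exp (-(t * u ^ 2) * w) =
      (1 - Real.exp (-(t * u ^ 2))) / (t * u ^ 2) := by
    rw [← intervalIntegral.integral_of_le zero_le_one, expInt _ _ hc]
    rw [mul_one]
    field_simp
    ring
  calc ∫ w in Ioc (0:ℝ) 1, u ^ (-(1:ℝ)/2) * Real.exp (-(t * w) * u ^ 2)
      = ∫ w in Ioc (0:ℝ) 1, u ^ (-(1:ℝ)/2) * Real.exp (-(t * u ^ 2) * w) := by
        refine setIntegral_congr_fun measurableSet_Ioc (fun w _ => ?_)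
        ring_nf
    _ = u ^ (-(1:ℝ)/2) * ((1 - Real.exp (-(t * u ^ 2))) / (t * u ^ 2)) := by
        rw [integral_const_mul, h1]

private lemma innerLe {t u : ℝ} (ht : 0 < t) (hu : 0 < u) :
    (∫ v in (0:ℝ)..u, (u ^ 2 + v ^ 2) ^ (-(3:ℝ)/4) * Real.exp (-(t * u * v))) ≤
      u ^ (-(1:ℝ)/2) * ((1 - Real.exp (-(t * u ^ 2))) / (t * u ^ 2)) := by
  have hcf : Continuous fun v : ℝ => (u ^ 2 + v ^ 2) ^ (-(3:ℝ)/4) * Real.exp (-(t * u * v)) := by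
    refine Continuous.mul ?_ ?_
    · refine Continuous.rpow_const (by continuity) (fun v => Or.inl ?_)
      positivity
    · exact Real.continuous_exp.comp (by continuity)
  have hcg : Continuous fun v : ℝ => u ^ (-(3:ℝ)/2) * Real.exp (-(t * u * v)) :=
    continuous_const.mul (Real.continuous_exp.comp (by continuity))
  have hmono : (∫ v in (0:ℝ)..u, (u ^ 2 + v ^ 2) ^ (-(3:ℝ)/4) * Real.exp (-(t * u * v))) ≤
      ∫ v in (0:ℝ)..u, u ^ (-(3:ℝ)/2) * Real.exp (-(t * u * v)) := by
    refine intervalIntegral.integral_mono_on hu.le (hcf.intervalIntegrable 0 u) (hcg.intervalIntegrable 0 u)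
      (fun v _ => ?_)
    refine mul_le_mul_of_nonneg_right ?_ (Real.exp_nonneg _)
    have h1 : ((u:ℝ) ^ 2) ^ (-(3:ℝ)/4) = u ^ (-(3:ℝ)/2) := by
      rw [← Real.rpow_natCast u 2, ← Real.rpow_mul hu.le]
      norm_num
    calc (u ^ 2 + v ^ 2) ^ (-(3:ℝ)/4) ≤ ((u:ℝ) ^ 2) ^ (-(3:ℝ)/4) :=
          Real.rpow_le_rpow_of_nonpos (by positivity) (by nlinarith) (by norm_num)
      _ = u ^ (-(3:ℝ)/2) := h1
  have hval : (∫ v in (0:ℝ)..u, u ^ (-(3:ℝ)/2) * Real.exp (-(t * u * v))) =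
      u ^ (-(1:ℝ)/2) * ((1 - Real.exp (-(t * u ^ 2))) / (t * u ^ 2)) := by
    have hc : (-(t * u)) ≠ 0 := neg_ne_zero.mpr (by positivity)
    rw [intervalIntegral.integral_const_mul]
    have : (∫ v in (0:ℝ)..u, Real.exp (-(t * u * v))) =
        (1 - Real.exp (-(t * u ^ 2))) / (t * u) := by
      have h2 : ∀ v : ℝ, Real.exp (-(t * u * v)) = Real.exp ((-(t * u)) * v) := by
        intro v; ring_nf
      simp_rw [h2, expInt _ _ hc]
      rw [show (-(t * u)) * u = -(t * u ^ 2) by ring]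
      field_simp
      ring
    rw [this]
    have hsplit : u ^ (-(3:ℝ)/2) * u = u ^ (-(1:ℝ)/2) := by
      rw [← Real.rpow_add_one hu.ne' (-(3:ℝ)/2)]
      norm_num
    rw [← hsplit]
    field_simp
  linarith [hmono, hval.le]

theorem sector_double_integral_three_quarter (t : ℝ) (ht : 0 < t) :
    (∫ u in Set.Ioi (0:ℝ),
        ∫ v in (0:ℝ)..u, (u ^ 2 + v ^ 2) ^ (-(3:ℝ)/4) * Real.exp (-(t * u * v))) ≤
      2 / 3 * Real.Gamma (1/4) * t ^ (-(1:ℝ)/4) := by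
  set h : ℝ → ℝ → ℝ := fun u w => u ^ (-(1:ℝ)/2) * Real.exp (-(t * w) * u ^ 2) with hh
  set F : ℝ → ℝ := fun u => u ^ (-(1:ℝ)/2) * ((1 - Real.exp (-(t * u ^ 2))) / (t * u ^ 2)) with hF
  have hFm : Measurable F := by
    apply Measurable.mul
    · exact measurable_id.pow measurable_const
    · fun_prop
  have hhm : Measurable (Function.uncurry h) := by
    apply Measurable.mul
    · exact measurable_fst.pow measurable_const
    · fun_prop
  -- integrability of F on Ioi 0
  have hF1 : IntegrableOn F (Ioc (0:ℝ) 1) := by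
    refine Integrable.mono' ((intervalIntegral.intervalIntegrable_rpow' (a := 0) (b := 1)
      (by norm_num : (-1:ℝ) < -(1:ℝ)/2)).1) hFm.aestronglyMeasurable ?_
    filter_upwards [ae_restrict_mem measurableSet_Ioc] with u hu
    have hu0 : 0 < u := hu.1
    have hc : 0 < t * u ^ 2 := by positivity
    have hexp : Real.exp (-(t * u ^ 2)) ≤ 1 := Real.exp_le_one_iff.mpr (by linarith)
    have hb : (1 - Real.exp (-(t * u ^ 2))) / (t * u ^ 2) ≤ 1 := by
      rw [div_le_one hc]
      have := Real.add_one_le_exp (-(t * u ^ 2))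
      linarith
    have hnn : 0 ≤ F u := by
      apply mul_nonneg (Real.rpow_nonneg hu0.le _)
      apply div_nonneg (by linarith) hc.le
    rw [Real.norm_of_nonneg hnn]
    calc F u ≤ u ^ (-(1:ℝ)/2) * 1 :=
          mul_le_mul_of_nonneg_left hb (Real.rpow_nonneg hu0.le _)
      _ = u ^ (-(1:ℝ)/2) := mul_one _
  have hF2 : IntegrableOn F (Ioi (1:ℝ)) := by
    refine Integrable.mono'
      ((integrableOn_Ioi_rpow_of_lt (by norm_num : (-(5:ℝ)/2) < -1) one_pos).const_mul (1/t))
      hFm.aestronglyMeasurable ?_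
    filter_upwards [ae_restrict_mem measurableSet_Ioi] with u hu1
    have hu0 : (0:ℝ) < u := lt_trans one_pos hu1
    have hc : 0 < t * u ^ 2 := by positivity
    have hexp : Real.exp (-(t * u ^ 2)) ≤ 1 := Real.exp_le_one_iff.mpr (by linarith)
    have hexp0 : 0 ≤ Real.exp (-(t * u ^ 2)) := Real.exp_nonneg _
    have hnn : 0 ≤ F u := by
      apply mul_nonneg (Real.rpow_nonneg hu0.le _)
      apply div_nonneg (by linarith) hc.le
    rw [Real.norm_of_nonneg hnn]
    have hid : u ^ (-(1:ℝ)/2) = u ^ (-(5:ℝ)/2) * u ^ 2 := by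
      rw [← Real.rpow_natCast u 2, ← Real.rpow_add hu0]
      norm_num
    have hle : F u ≤ u ^ (-(1:ℝ)/2) * (1 / (t * u ^ 2)) := by
      have hdiv : (1 - Real.exp (-(t * u ^ 2))) / (t * u ^ 2) ≤ 1 / (t * u ^ 2) := by
        gcongr
        linarith
      exact mul_le_mul_of_nonneg_left hdiv (Real.rpow_nonneg hu0.le _)
    have heq : u ^ (-(1:ℝ)/2) * (1 / (t * u ^ 2)) = 1 / t * u ^ (-(5:ℝ)/2) := by
      rw [hid]
      field_simp
    calc F u ≤ u ^ (-(1:ℝ)/2) * (1 / (t * u ^ 2)) := hle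
      _ = 1 / t * u ^ (-(5:ℝ)/2) := heq
  have hFint : IntegrableOn F (Ioi (0:ℝ)) := by
    rw [← Ioc_union_Ioi_eq_Ioi (zero_le_one (α := ℝ))]
    exact hF1.union hF2
  -- integrability on the product
  have hprod : Integrable (Function.uncurry h)
      ((volume.restrict (Ioi (0:ℝ))).prod (volume.restrict (Ioc (0:ℝ) 1))) := by
    rw [integrable_prod_iff hhm.aestronglyMeasurable]
    constructor
    · filter_upwards [ae_restrict_mem measurableSet_Ioi] with u hu
      have : Continuous fun w => h u w := by
        apply continuous_const.mul
        fun_prop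
      exact this.integrableOn_Ioc
    · have heqF : (fun u => ∫ w in Ioc (0:ℝ) 1, ‖h u w‖)
          =ᵐ[volume.restrict (Ioi (0:ℝ))] F := by
        filter_upwards [ae_restrict_mem measurableSet_Ioi] with u hu
        have hpos : ∀ w, ‖h u w‖ = h u w := fun w =>
          Real.norm_of_nonneg (mul_nonneg (Real.rpow_nonneg (le_of_lt hu) _) (Real.exp_nonneg _))
        simp_rw [hpos]
        exact Jval ht hu
      exact (hFint.congr heqF.symm)
  -- the pointwise bound and swap
  have step1 : (∫ u in Set.Ioi (0:ℝ),
        ∫ v in (0:ℝ)..u, (u ^ 2 + v ^ 2) ^ (-(3:ℝ)/4) * Real.exp (-(t * u * v))) ≤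
      ∫ u in Set.Ioi (0:ℝ), ∫ w in Ioc (0:ℝ) 1, h u w := by
    refine integral_mono_of_nonneg ?_ hprod.integral_prod_left ?_
    · filter_upwards [ae_restrict_mem measurableSet_Ioi] with u hu
      refine intervalIntegral.integral_nonneg (le_of_lt hu) (fun v _ => ?_)
      have : (0:ℝ) ≤ (u ^ 2 + v ^ 2) ^ (-(3:ℝ)/4) := Real.rpow_nonneg (by positivity) _
      exact mul_nonneg this (Real.exp_nonneg _)
    · filter_upwards [ae_restrict_mem measurableSet_Ioi] with u hu
      have := innerLe ht hu
      rw [Jval ht hu]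
      exact this
  have step2 : (∫ u in Set.Ioi (0:ℝ), ∫ w in Ioc (0:ℝ) 1, h u w)
      = ∫ w in Ioc (0:ℝ) 1, ∫ u in Set.Ioi (0:ℝ), h u w :=
    integral_integral_swap hprod
  have step3 : (∫ w in Ioc (0:ℝ) 1, ∫ u in Set.Ioi (0:ℝ), h u w)
      = 2 / 3 * Real.Gamma (1/4) * t ^ (-(1:ℝ)/4) := by
    have e1 : (∫ w in Ioc (0:ℝ) 1, ∫ u in Set.Ioi (0:ℝ), h u w)
        = ∫ w in Ioc (0:ℝ) 1,
            (t ^ (-(1:ℝ)/4) * (1/2) * Real.Gamma (1/4)) * w ^ (-(1:ℝ)/4) := by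
      refine setIntegral_congr_fun measurableSet_Ioc (fun w hw => ?_)
      have hb : 0 < t * w := mul_pos ht hw.1
      rw [gammaInt hb, Real.mul_rpow ht.le hw.1.le]
      ring
    rw [e1, integral_const_mul]
    have e2 : (∫ w in Ioc (0:ℝ) 1, w ^ (-(1:ℝ)/4)) = 4/3 := by
      rw [← intervalIntegral.integral_of_le zero_le_one,
        integral_rpow (Or.inl (by norm_num))]
      rw [Real.one_rpow, Real.zero_rpow (by norm_num)]
      norm_num
    rw [e2]
    ring
  calc (∫ u in Set.Ioi (0:ℝ),
        ∫ v in (0:ℝ)..u, (u ^ 2 + v ^ 2) ^ (-(3:ℝ)/4) * Real.exp (-(t * u * v)))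
      ≤ ∫ u in Set.Ioi (0:ℝ), ∫ w in Ioc (0:ℝ) 1, h u w := step1
    _ = ∫ w in Ioc (0:ℝ) 1, ∫ u in Set.Ioi (0:ℝ), h u w := step2
    _ = 2 / 3 * Real.Gamma (1/4) * t ^ (-(1:ℝ)/4) := step3
end

section
/- Let n \ge 3 be an odd integer, let f \in L^2(\mathbb{R}) be nonnegative, and let t > 0, \varepsilon > 0, M > 0. Then \int_{\{|u| \ge M\varepsilon\}} f(u) \left( \int_0^\varepsilon e^{-n t v u^{n-1}}\, dv \right) du \le \frac{1}{n t}\, \|f\|_{L^2(\mathbb{R})} \left( \frac{2}{(2n-3)\,(M\varepsilon)^{2n-3}} \right)^{1/2}. -/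
open MeasureTheory Set

lemma exp_inner_bound (b ε : ℝ) (hb : 0 < b) (hε : 0 ≤ ε) :
    ∫ v in (0:ℝ)..ε, Real.exp (-(b * v)) ≤ b⁻¹ := by
  have h : ∫ v in (0:ℝ)..ε, Real.exp (-(b * v)) = b⁻¹ * (1 - Real.exp (-(b * ε))) := by
    have h1 := intervalIntegral.integral_comp_mul_left (a := (0:ℝ)) (b := ε)
      (f := fun x => Real.exp (-x)) (c := b) hb.ne'
    simp only [mul_zero] at h1
    rw [h1, intervalIntegral.integral_comp_neg (fun x => Real.exp x),
      show (-0:ℝ) = 0 by norm_num, integral_exp]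
    simp [smul_eq_mul, Real.exp_zero]
  rw [h]
  have h1 : 0 ≤ Real.exp (-(b * ε)) := (Real.exp_pos _).le
  have h2 : (1 - Real.exp (-(b * ε))) ≤ 1 := by linarith
  calc b⁻¹ * (1 - Real.exp (-(b * ε))) ≤ b⁻¹ * 1 :=
        mul_le_mul_of_nonneg_left h2 (inv_nonneg.2 hb.le)
    _ = b⁻¹ := mul_one _

lemma abs_pow_inv_integral (a : ℝ) (ha : 0 < a) (m : ℕ) (hm : 2 ≤ m) :
    IntegrableOn (fun u : ℝ => (|u| ^ m)⁻¹) {u : ℝ | a ≤ |u|} ∧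
      ∫ u in {u : ℝ | a ≤ |u|}, (|u| ^ m)⁻¹ = 2 / (((m : ℝ) - 1) * a ^ (m - 1)) := by
  set g : ℝ → ℝ := fun u => (|u| ^ m)⁻¹ with hg_def
  have hexp : (-(m:ℝ)) < -1 := by
    have : (2:ℝ) ≤ m := by exact_mod_cast hm
    linarith
  have hEq : EqOn g (fun u : ℝ => u ^ (-(m:ℝ))) (Ioi a) := by
    intro u hu
    have hu0 : 0 < u := ha.trans hu
    simp only [hg_def]
    rw [abs_of_pos hu0, Real.rpow_neg hu0.le, Real.rpow_natCast]
  have hIoi : IntegrableOn g (Ioi a) :=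
    (integrableOn_Ioi_rpow_of_lt hexp ha).congr_fun (fun u hu => (hEq hu).symm) measurableSet_Ioi
  have hIci : IntegrableOn g (Ici a) := by
    rwa [integrableOn_Ici_iff_integrableOn_Ioi]
  have hcast : ((m - 1 : ℕ) : ℝ) = (m : ℝ) - 1 := by
    have h1 : (1:ℕ) ≤ m := by omega
    rw [Nat.cast_sub h1]
    norm_num
  have hm1ne : ((m:ℝ) - 1) ≠ 0 := by
    have : (2:ℝ) ≤ m := by exact_mod_cast hm
    linarith
  have hane : a ^ (m - 1) ≠ 0 := pow_ne_zero _ ha.ne'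
  have hval : ∫ u in Ioi a, g u = 1 / (((m:ℝ) - 1) * a ^ (m - 1)) := by
    rw [setIntegral_congr_fun measurableSet_Ioi hEq, integral_Ioi_rpow_of_lt hexp ha]
    rw [show (-(m:ℝ) + 1) = -(((m - 1 : ℕ)):ℝ) by rw [hcast]; ring]
    rw [Real.rpow_neg ha.le, Real.rpow_natCast, hcast]
    rw [neg_div_neg_eq,
      div_eq_div_iff hm1ne (mul_ne_zero hm1ne hane), one_mul,
      mul_comm ((m:ℝ) - 1), ← mul_assoc, inv_mul_cancel₀ hane, one_mul]
  have hneg : ∀ u : ℝ, g (-u) = g u := fun u => by simp [hg_def, abs_neg]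
  have hIic : IntegrableOn g (Iic (-a)) := by
    rw [← (Measure.measurePreserving_neg (volume : Measure ℝ)).integrableOn_comp_preimage
        (Homeomorph.neg ℝ).measurableEmbedding]
    have hpre : (fun x : ℝ => -x) ⁻¹' (Iic (-a)) = Ici a := by
      ext x; simp
    rw [hpre]
    exact hIci.congr_fun (fun x _ => (hneg x).symm) measurableSet_Ici
  have hvalIic : ∫ u in Iic (-a), g u = ∫ u in Ioi a, g u := by
    have h2 := integral_comp_neg_Iic (-a) g
    rw [neg_neg] at h2
    rw [← h2]
    exact setIntegral_congr_fun measurableSet_Iic (fun x _ => (hneg x).symm)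
  have hSeq : {u : ℝ | a ≤ |u|} = Iic (-a) ∪ Ici a := by
    ext u
    simp only [mem_setOf_eq, mem_union, mem_Iic, mem_Ici, le_abs]
    constructor
    · rintro (h | h)
      · exact Or.inr h
      · exact Or.inl (by linarith)
    · rintro (h | h)
      · exact Or.inr (by linarith)
      · exact Or.inl h
  have hdisj : Disjoint (Iic (-a)) (Ici a) := by
    rw [Iic_disjoint_Ici]
    intro h
    linarith
  constructor
  · rw [hSeq]
    exact hIic.union hIci
  · rw [hSeq, setIntegral_union hdisj measurableSet_Ici hIic hIci, hvalIic,
      integral_Ici_eq_integral_Ioi, hval]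
    ring

/-- Estimate of `Δ₂` (the region `|u| ≥ Mε`) in the fast decaying region. -/
theorem fast_decay_delta_two (n : ℕ) (hn : Odd n) (h3 : 3 ≤ n)
    (f : ℝ → ℝ) (hf2 : MemLp f 2 volume) (hfnn : ∀ u, 0 ≤ f u)
    (t ε M : ℝ) (ht : 0 < t) (hε : 0 < ε) (hM : 0 < M) :
    (∫ u in {u : ℝ | M * ε ≤ |u|},
        f u * ∫ v in (0:ℝ)..ε, Real.exp (-((n : ℝ) * t * v * u ^ (n - 1)))) ≤
      1 / ((n : ℝ) * t) * (eLpNorm f 2 volume).toReal *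
        (2 / ((2 * (n : ℝ) - 3) * (M * ε) ^ (2 * n - 3))) ^ ((1:ℝ)/2) := by
  have hn0 : (0:ℝ) < n := by exact_mod_cast (show 0 < n by omega)
  set a : ℝ := M * ε with ha_def
  have ha : 0 < a := mul_pos hM hε
  set c : ℝ := (n : ℝ) * t with hc_def
  have hc : 0 < c := mul_pos hn0 ht
  set k := n - 1 with hk_def
  have hkeven : Even k := by
    rcases hn with ⟨m, hm⟩
    exact ⟨m, by omega⟩
  set S := {u : ℝ | a ≤ |u|} with hS_def
  have hSmeas : MeasurableSet S := continuous_abs.measurable measurableSet_Ici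
  set w : ℝ → ℝ := fun u => (c * |u| ^ k)⁻¹ with hw_def
  have hw_nonneg : ∀ u, 0 ≤ w u :=
    fun u => inv_nonneg.2 (mul_nonneg hc.le (pow_nonneg (abs_nonneg u) k))
  have hw_meas : Measurable w := ((continuous_const.mul (continuous_abs.pow k)).measurable).inv
  -- pointwise bound on the inner integral
  have hg_nonneg : ∀ u : ℝ, 0 ≤ ∫ v in (0:ℝ)..ε, Real.exp (-(c * v * u ^ k)) := fun u =>
    intervalIntegral.integral_nonneg hε.le fun x _ => (Real.exp_pos _).le
  have hg_le : ∀ u ∈ S, (∫ v in (0:ℝ)..ε, Real.exp (-(c * v * u ^ k))) ≤ w u := by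
    intro u hu
    have hu0 : 0 < |u| := lt_of_lt_of_le ha hu
    have hupow : u ^ k = |u| ^ k := (hkeven.pow_abs u).symm
    have hb : 0 < c * |u| ^ k := mul_pos hc (pow_pos hu0 k)
    have h1 : ∀ v : ℝ, c * v * u ^ k = (c * |u| ^ k) * v := by
      intro v; rw [hupow]; ring
    simp only [h1]
    exact exp_inner_bound _ ε hb hε.le
  -- integrability facts
  obtain ⟨hInt, hVal⟩ := abs_pow_inv_integral a ha (k * 2) (by omega)
  have hw_sq : ∀ u, w u ^ 2 = (c ^ 2)⁻¹ * (|u| ^ (k * 2))⁻¹ := by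
    intro u
    simp only [hw_def]
    rw [mul_inv, mul_pow, inv_pow, inv_pow, ← pow_mul]
  have hw_sq_int : IntegrableOn (fun u => w u ^ 2) S := by
    exact IntegrableOn.congr_fun (hInt.const_mul ((c ^ 2)⁻¹)) (fun u _ => (hw_sq u).symm) hSmeas
  have hw_mem : MemLp w 2 (volume.restrict S) :=
    (memLp_two_iff_integrable_sq hw_meas.aestronglyMeasurable).2 hw_sq_int
  have hf_mem : MemLp f 2 (volume.restrict S) := hf2.restrict S
  have hfw_int : Integrable (fun u => f u * w u) (volume.restrict S) := by
    have hb : Integrable (fun u => (f u ^ 2 + w u ^ 2) / 2) (volume.restrict S) :=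
      ((hf2.integrable_sq.restrict (s := S)).add hw_sq_int).div_const 2
    refine hb.mono' (hf2.1.restrict.mul hw_meas.aestronglyMeasurable) ?_
    filter_upwards with u
    rw [Real.norm_eq_abs, abs_of_nonneg (mul_nonneg (hfnn u) (hw_nonneg u))]
    nlinarith [sq_nonneg (f u - w u)]
  -- step 1 : replace the inner integral by the bound w
  have step1 : (∫ u in S, f u * ∫ v in (0:ℝ)..ε, Real.exp (-(c * v * u ^ k))) ≤
      ∫ u in S, f u * w u := by
    apply integral_mono_of_nonneg
    · filter_upwards with u
      exact mul_nonneg (hfnn u) (hg_nonneg u)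
    · exact hfw_int
    · filter_upwards [ae_restrict_mem hSmeas] with u hu
      exact mul_le_mul_of_nonneg_left (hg_le u hu) (hfnn u)
  -- step 2 : Cauchy-Schwarz
  have hconj : Real.HolderConjugate 2 2 := by
    rw [Real.holderConjugate_iff]
    norm_num
  have hofReal : ENNReal.ofReal (2:ℝ) = 2 := by
    simp [ENNReal.ofReal_ofNat]
  have step2 : ∫ u in S, f u * w u ≤
      (∫ u in S, f u ^ (2:ℝ)) ^ ((1:ℝ)/2) * (∫ u in S, w u ^ (2:ℝ)) ^ ((1:ℝ)/2) := by
    apply integral_mul_le_Lp_mul_Lq_of_nonneg hconj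
    · filter_upwards with u; exact hfnn u
    · filter_upwards with u; exact hw_nonneg u
    · rw [hofReal]; exact hf_mem
    · rw [hofReal]; exact hw_mem
  -- bound the f factor by the L² norm
  have hNf : (∫ u in S, f u ^ (2:ℝ)) ^ ((1:ℝ)/2) ≤ (eLpNorm f 2 volume).toReal := by
    have h1 : ∫ u in S, f u ^ (2:ℝ) ≤ ∫ u, f u ^ (2:ℝ) := by
      apply setIntegral_le_integral
      · simpa only [Real.rpow_two] using hf2.integrable_sq
      · filter_upwards with u
        exact Real.rpow_nonneg (hfnn u) 2
    have h2 : (eLpNorm f 2 volume).toReal = (∫ u, f u ^ (2:ℝ)) ^ ((1:ℝ)/2) := by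
      rw [hf2.eLpNorm_eq_integral_rpow_norm two_ne_zero ENNReal.ofNat_ne_top,
        ENNReal.toReal_ofReal (by positivity)]
      simp only [ENNReal.toReal_ofNat]
      rw [show ((2:ℝ))⁻¹ = (1:ℝ)/2 by norm_num]
      congr 1
      apply integral_congr_ae
      filter_upwards with u
      rw [Real.norm_eq_abs, abs_of_nonneg (hfnn u)]
    rw [h2]
    apply Real.rpow_le_rpow _ h1 (by norm_num)
    apply setIntegral_nonneg hSmeas
    intro u _
    exact Real.rpow_nonneg (hfnn u) 2
  -- compute the w factor
  have hn3 : (3:ℝ) ≤ (n:ℝ) := by exact_mod_cast h3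
  have hden : (0:ℝ) < (2 * (n:ℝ) - 3) * a ^ (2 * n - 3) := by
    apply mul_pos (by linarith) (pow_pos ha _)
  have hXnn : (0:ℝ) ≤ 2 / ((2 * (n:ℝ) - 3) * a ^ (2 * n - 3)) :=
    div_nonneg (by norm_num) hden.le
  have hcfac : ((c ^ 2)⁻¹ : ℝ) ^ ((1:ℝ)/2) = c⁻¹ := by
    rw [← Real.rpow_natCast c 2, ← Real.rpow_neg hc.le, ← Real.rpow_mul hc.le]
    rw [show (-((2:ℕ):ℝ)) * ((1:ℝ)/2) = (-1:ℝ) by norm_num, Real.rpow_neg_one]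
  have hwval : (∫ u in S, w u ^ (2:ℝ)) ^ ((1:ℝ)/2) =
      c⁻¹ * (2 / ((2 * (n:ℝ) - 3) * a ^ (2 * n - 3))) ^ ((1:ℝ)/2) := by
    have h1 : ∫ u in S, w u ^ (2:ℝ) = (c ^ 2)⁻¹ * (2 / ((2 * (n:ℝ) - 3) * a ^ (2 * n - 3))) := by
      simp_rw [Real.rpow_two, hw_sq]
      rw [integral_const_mul, hVal]
      have e1 : ((k * 2 : ℕ):ℝ) - 1 = 2 * (n:ℝ) - 3 := by
        have e0 : ((k * 2 : ℕ):ℝ) = 2 * (n:ℝ) - 2 := by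
          simp only [hk_def]
          push_cast [Nat.cast_sub (by omega : 1 ≤ n)]
          ring
        rw [e0]; ring
      have e2 : k * 2 - 1 = 2 * n - 3 := by omega
      rw [e1, e2]
    rw [h1, Real.mul_rpow (by positivity) hXnn, hcfac]
  have hwint_nn : (0:ℝ) ≤ (∫ u in S, w u ^ (2:ℝ)) ^ ((1:ℝ)/2) :=
    Real.rpow_nonneg (setIntegral_nonneg hSmeas fun u _ => Real.rpow_nonneg (hw_nonneg u) 2) _
  calc (∫ u in S, f u * ∫ v in (0:ℝ)..ε, Real.exp (-(c * v * u ^ k)))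
      ≤ ∫ u in S, f u * w u := step1
    _ ≤ (∫ u in S, f u ^ (2:ℝ)) ^ ((1:ℝ)/2) * (∫ u in S, w u ^ (2:ℝ)) ^ ((1:ℝ)/2) := step2
    _ ≤ (eLpNorm f 2 volume).toReal * ((∫ u in S, w u ^ (2:ℝ)) ^ ((1:ℝ)/2)) :=
        mul_le_mul_of_nonneg_right hNf hwint_nn
    _ = 1 / c * (eLpNorm f 2 volume).toReal *
        (2 / ((2 * (n:ℝ) - 3) * a ^ (2 * n - 3))) ^ ((1:ℝ)/2) := by
        rw [hwval, one_div]
        ring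
end

section
/- Let \alpha \in (0, \pi/2), \xi_0 \in \mathbb{R}, a > 0, and let \Omega = \{ \xi_0 + \rho e^{i\phi} : \rho > 0, 0 < \phi < \alpha \}. Let \mathcal{K} : [0, \alpha] \to \mathbb{R} be continuously differentiable with \mathcal{K}(0) = 1, \mathcal{K}(\alpha) = 0 and 0 \le \mathcal{K} \le 1, and let R : \mathbb{R} \to \mathbb{C} be continuously differentiable with R' \in L^2(\mathbb{R}). Define E : \Omega \to \mathbb{C} by E(\gamma) = \mathcal{K}(\arg(\gamma - \xi_0))\, R(a\, \mathrm{Re}\,\gamma) + (1 - \mathcal{K}(\arg(\gamma - \xi_0)))\, R(a\, \xi_0). Then for every \gamma \in \Omega the Wirtinger derivative satisfies |\bar{\partial} E(\gamma)| \le \frac{\sup|\mathcal{K}'|}{2}\, \|R'\|_{L^2(\mathbb{R})}\, a^{1/2}\, |\gamma - \xi_0|^{-1/2} + a\, |R'(a\, \mathrm{Re}\,\gamma)|. -/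
open MeasureTheory
open scoped ENNReal

lemma holder_half_aux (R : ℝ → ℂ) (hR : ContDiff ℝ 1 R) (hR2 : MemLp (deriv R) 2 volume)
    {b c : ℝ} (hcb : c ≤ b) :
    ‖R b - R c‖ ≤ (eLpNorm (deriv R) 2 volume).toReal * |b - c| ^ ((1:ℝ)/2) := by
  have hcont : Continuous (deriv R) := hR.continuous_deriv le_rfl
  have hFTC : ∫ t in c..b, deriv R t = R b - R c :=
    intervalIntegral.integral_deriv_eq_sub
      (fun x _ => (hR.differentiable one_ne_zero).differentiableAt)
      (hcont.intervalIntegrable c b)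
  rw [← hFTC, intervalIntegral.integral_of_le hcb]
  have hmeas : AEStronglyMeasurable (deriv R) (volume.restrict (Set.Ioc c b)) :=
    hcont.aestronglyMeasurable
  have h1 : ‖∫ t in Set.Ioc c b, deriv R t‖ ≤
      (eLpNorm (deriv R) 1 (volume.restrict (Set.Ioc c b))).toReal := by
    rw [eLpNorm_one_eq_lintegral_enorm]
    calc ‖∫ t in Set.Ioc c b, deriv R t‖ ≤ ∫ t in Set.Ioc c b, ‖deriv R t‖ :=
          norm_integral_le_integral_norm _
      _ = (∫⁻ t in Set.Ioc c b, ‖deriv R t‖ₑ).toReal :=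
          integral_norm_eq_lintegral_enorm hmeas
  have h2 : eLpNorm (deriv R) 1 (volume.restrict (Set.Ioc c b)) ≤
      eLpNorm (deriv R) 2 volume * ENNReal.ofReal (b - c) ^ ((1:ℝ)/2) := by
    calc eLpNorm (deriv R) 1 (volume.restrict (Set.Ioc c b)) ≤
        eLpNorm (deriv R) 2 (volume.restrict (Set.Ioc c b)) *
          (volume.restrict (Set.Ioc c b)) Set.univ ^
            (1/(1:ℝ≥0∞).toReal - 1/(2:ℝ≥0∞).toReal) :=
          eLpNorm_le_eLpNorm_mul_rpow_measure_univ (by norm_num) hmeas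
      _ ≤ eLpNorm (deriv R) 2 volume * ENNReal.ofReal (b - c) ^ ((1:ℝ)/2) := by
          rw [Measure.restrict_apply_univ, Real.volume_Ioc,
            (by norm_num : 1/(1:ℝ≥0∞).toReal - 1/(2:ℝ≥0∞).toReal = (1:ℝ)/2)]
          gcongr
          exact Measure.restrict_le_self
  have hfin : eLpNorm (deriv R) 2 volume * ENNReal.ofReal (b - c) ^ ((1:ℝ)/2) ≠ ⊤ := by
    exact ENNReal.mul_ne_top hR2.2.ne (by
      apply ENNReal.rpow_ne_top_of_nonneg (by norm_num) ENNReal.ofReal_ne_top)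
  have h3 := ENNReal.toReal_mono hfin h2
  refine h1.trans (h3.trans_eq ?_)
  rw [ENNReal.toReal_mul, ← ENNReal.toReal_rpow, ENNReal.toReal_ofReal (by linarith),
    abs_of_nonneg (by linarith)]

lemma holder_half (R : ℝ → ℂ) (hR : ContDiff ℝ 1 R) (hR2 : MemLp (deriv R) 2 volume)
    (b c : ℝ) :
    ‖R b - R c‖ ≤ (eLpNorm (deriv R) 2 volume).toReal * |b - c| ^ ((1:ℝ)/2) := by
  rcases le_total c b with h | h
  · exact holder_half_aux R hR hR2 h
  · rw [← norm_neg, neg_sub, ← abs_neg, neg_sub]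
    exact holder_half_aux R hR hR2 h

lemma hasDerivAt_arg_comp {f : ℝ → ℂ} {f' : ℂ} {x : ℝ} {z : ℂ}
    (hf : HasDerivAt f f' x) (hfx : f x = z) (hz : z ∈ Complex.slitPlane) :
    HasDerivAt (fun t => (f t).arg) ((z⁻¹ * f').im) x := by
  have hlog : HasDerivAt (fun t => Complex.log (f t)) (z⁻¹ * f') x := by
    have h1 : HasFDerivAt Complex.log ((z⁻¹ : ℂ) • (1 : ℂ →L[ℝ] ℂ)) (f x) := by
      rw [hfx]; exact (Complex.hasDerivAt_log hz).complexToReal_fderiv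
    have := h1.comp_hasDerivAt x hf
    simp at this
    exact this
  have him : HasDerivAt (fun t => (Complex.log (f t)).im) ((z⁻¹ * f').im) x :=
    Complex.imCLM.hasFDerivAt.comp_hasDerivAt x hlog
  simpa only [Complex.log_im] using him

/-- Bound on the `∂̄`-derivative of the lens-opening extension in the
Painlevé region, with rescaling factor `a = (nt)^{-1/n}`. -/
theorem dbar_extension_estimate_painleve (α ξ₀ a : ℝ)
    (hα : 0 < α) (hα' : α < Real.pi / 2) (ha : 0 < a)
    (Ω : Set ℂ)
    (hΩ : Ω = {w : ℂ | 0 < (w - (ξ₀ : ℂ)).arg ∧ (w - (ξ₀ : ℂ)).arg < α})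
    (K : ℝ → ℝ) (hK : ContDiff ℝ 1 K) (hK0 : K 0 = 1) (hKα : K α = 0)
    (hK01 : ∀ x ∈ Set.Icc (0:ℝ) α, K x ∈ Set.Icc (0:ℝ) 1)
    (R : ℝ → ℂ) (hR : ContDiff ℝ 1 R) (hR2 : MemLp (deriv R) 2 volume)
    (E : ℂ → ℂ)
    (hE : ∀ w, E w = (K ((w - (ξ₀ : ℂ)).arg) : ℂ) * R (a * w.re)
        + (1 - (K ((w - (ξ₀ : ℂ)).arg) : ℂ)) * R (a * ξ₀)) :
    ∀ w ∈ Ω, ‖dbar E w‖ ≤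
      (⨆ x ∈ Set.Icc (0:ℝ) α, |deriv K x|) / 2 *
          (eLpNorm (deriv R) 2 volume).toReal * a ^ ((1:ℝ)/2) *
          ‖w - (ξ₀ : ℂ)‖ ^ (-(1:ℝ)/2)
        + a * ‖deriv R (a * w.re)‖ := by
  intro w hw
  rw [hΩ, Set.mem_setOf_eq] at hw
  obtain ⟨hθ0, hθα⟩ := hw
  set z : ℂ := w - (ξ₀ : ℂ) with hzdef
  set θ : ℝ := z.arg with hθdef
  have hz0 : z ≠ 0 := by
    intro h
    simp only [hθdef, h, Complex.arg_zero] at hθ0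
    exact lt_irrefl 0 hθ0
  have habs : |z.arg| < Real.pi / 2 := by
    rw [abs_lt]
    constructor
    · nlinarith [Real.pi_pos]
    · exact hθα.trans hα'
  have hre : 0 < z.re := by
    rcases Complex.abs_arg_lt_pi_div_two_iff.mp habs with h | h
    · exact h
    · exact absurd h hz0
  have hslit : z ∈ Complex.slitPlane := Complex.mem_slitPlane_iff.mpr (Or.inl hre)
  have hrpos : 0 < ‖z‖ := norm_pos_iff.mpr hz0
  set c : ℂ := R (a * ξ₀) with hcdef
  set Rd : ℂ := deriv R (a * w.re) with hRddef
  set Kd : ℝ := deriv K θ with hKddef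
  set N : ℝ := (eLpNorm (deriv R) 2 volume).toReal with hNdef
  set M : ℝ := ⨆ x ∈ Set.Icc (0:ℝ) α, |deriv K x| with hMdef
  -- derivative of K
  have hKθ : HasDerivAt K Kd θ := (hK.differentiable one_ne_zero).differentiableAt.hasDerivAt
  -- x-direction
  have hf1 : HasDerivAt (fun x : ℝ => (x : ℂ) + w.im * Complex.I - ξ₀) 1 w.re := by
    simpa using ((Complex.ofRealCLM.hasDerivAt (x := w.re)).add_const
      ((w.im : ℂ) * Complex.I)).sub_const (ξ₀ : ℂ)
  have hf1val : ((w.re : ℂ) + w.im * Complex.I - ξ₀) = z := by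
    rw [Complex.re_add_im]
  have hθx : HasDerivAt (fun x : ℝ => ((x : ℂ) + w.im * Complex.I - ξ₀).arg)
      ((z⁻¹ * 1).im) w.re := hasDerivAt_arg_comp hf1 hf1val hslit
  set d1 : ℝ := (z⁻¹ * 1).im with hd1def
  have harg1 : (((w.re : ℂ) + w.im * Complex.I - ξ₀)).arg = θ := by rw [hf1val]
  have hKx : HasDerivAt (fun x : ℝ => K (((x : ℂ) + w.im * Complex.I - ξ₀).arg))
      (Kd * d1) w.re := by
    have h2 : HasDerivAt K Kd
        ((fun x : ℝ => ((x : ℂ) + w.im * Complex.I - ξ₀).arg) w.re) := by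
      simpa [harg1] using hKθ
    exact h2.comp w.re hθx
  have hKxc : HasDerivAt (fun x : ℝ => ((K (((x : ℂ) + w.im * Complex.I - ξ₀).arg) : ℝ) : ℂ))
      ((Kd * d1 : ℝ) : ℂ) w.re := hKx.ofReal_comp
  have hRx : HasDerivAt (fun x : ℝ => R (a * x)) (a • Rd) w.re := by
    have hRd' : HasDerivAt R Rd (a * w.re) :=
      ((hR.differentiable one_ne_zero) (a * w.re)).hasDerivAt
    have hax : HasDerivAt (fun x : ℝ => a * x) a w.re := by
      simpa using (hasDerivAt_id w.re).const_mul a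
    exact hRd'.scomp w.re hax
  have hg1 : HasDerivAt (fun x : ℝ => E ((x : ℂ) + w.im * Complex.I))
      (((Kd * d1 : ℝ) : ℂ) * R (a * w.re) + (K (((w.re : ℂ) + w.im * Complex.I - ξ₀).arg) : ℂ) * (a • Rd)
        + ((0 - ((Kd * d1 : ℝ) : ℂ)) * c + (1 - (K (((w.re : ℂ) + w.im * Complex.I - ξ₀).arg) : ℂ)) * 0)) w.re := by
    have hder := (hKxc.mul hRx).add
      (((hasDerivAt_const w.re (1 : ℂ)).sub hKxc).mul (hasDerivAt_const w.re c))
    have hfun : (fun x : ℝ => E ((x : ℂ) + w.im * Complex.I)) =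
        (fun x : ℝ => ((K (((x : ℂ) + w.im * Complex.I - ξ₀).arg) : ℝ) : ℂ) * R (a * x)
          + (1 - ((K (((x : ℂ) + w.im * Complex.I - ξ₀).arg) : ℝ) : ℂ)) * c) := by
      funext x
      rw [hE]
      simp
    rw [hfun]
    exact hder
  -- y-direction
  have hf2 : HasDerivAt (fun y : ℝ => (w.re : ℂ) + y * Complex.I - ξ₀) Complex.I w.im := by
    simpa using (((Complex.ofRealCLM.hasDerivAt (x := w.im)).mul_const Complex.I).const_add
      ((w.re : ℂ))).sub_const (ξ₀ : ℂ)
  have hf2val : ((w.re : ℂ) + w.im * Complex.I - ξ₀) = z := by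
    rw [Complex.re_add_im]
  have hθy : HasDerivAt (fun y : ℝ => ((w.re : ℂ) + y * Complex.I - ξ₀).arg)
      ((z⁻¹ * Complex.I).im) w.im := hasDerivAt_arg_comp hf2 hf2val hslit
  set d2 : ℝ := (z⁻¹ * Complex.I).im with hd2def
  have hKy : HasDerivAt (fun y : ℝ => K (((w.re : ℂ) + y * Complex.I - ξ₀).arg))
      (Kd * d2) w.im := by
    have h2 : HasDerivAt K Kd
        ((fun y : ℝ => ((w.re : ℂ) + y * Complex.I - ξ₀).arg) w.im) := by
      simpa [harg1] using hKθ
    exact h2.comp w.im hθy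
  have hKyc : HasDerivAt (fun y : ℝ => ((K (((w.re : ℂ) + y * Complex.I - ξ₀).arg) : ℝ) : ℂ))
      ((Kd * d2 : ℝ) : ℂ) w.im := hKy.ofReal_comp
  have hg2 : HasDerivAt (fun y : ℝ => E ((w.re : ℂ) + y * Complex.I))
      (((Kd * d2 : ℝ) : ℂ) * R (a * w.re) + (K (((w.re : ℂ) + w.im * Complex.I - ξ₀).arg) : ℂ) * 0
        + ((0 - ((Kd * d2 : ℝ) : ℂ)) * c + (1 - (K (((w.re : ℂ) + w.im * Complex.I - ξ₀).arg) : ℂ)) * 0)) w.im := by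
    have hder := (hKyc.mul (hasDerivAt_const w.im (R (a * w.re)))).add
      (((hasDerivAt_const w.im (1 : ℂ)).sub hKyc).mul (hasDerivAt_const w.im c))
    have hfun : (fun y : ℝ => E ((w.re : ℂ) + y * Complex.I)) =
        (fun y : ℝ => ((K (((w.re : ℂ) + y * Complex.I - ξ₀).arg) : ℝ) : ℂ) * R (a * w.re)
          + (1 - ((K (((w.re : ℂ) + y * Complex.I - ξ₀).arg) : ℝ) : ℂ)) * c) := by
      funext y
      rw [hE]
      simp
    rw [hfun]
    exact hder
  -- assemble dbar
  have hdb : dbar E w = ((Kd : ℂ) * (((d1 : ℂ) + Complex.I * (d2 : ℂ)) * (R (a * w.re) - c))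
      + ((K θ : ℝ) : ℂ) * ((a : ℂ) * Rd)) / 2 := by
    rw [dbar, hg1.deriv, hg2.deriv, harg1]
    rw [Complex.real_smul]
    push_cast
    ring
  -- norm of the d1 + i d2 factor
  have hd12norm : ‖((d1 : ℂ) + Complex.I * (d2 : ℂ))‖ = ‖z‖⁻¹ := by
    have hid : ((d1 : ℂ) + Complex.I * (d2 : ℂ)) = Complex.I * (starRingEnd ℂ) z⁻¹ := by
      apply Complex.ext <;>
        simp [hd1def, hd2def, Complex.mul_re, Complex.mul_im, Complex.add_re, Complex.add_im,
          neg_div]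
    rw [hid, norm_mul, Complex.norm_I, one_mul, RCLike.norm_conj, norm_inv]
  -- bound |Kd| by M
  have hθmem : θ ∈ Set.Icc (0:ℝ) α := ⟨hθ0.le, hθα.le⟩
  obtain ⟨C, hC⟩ := (isCompact_Icc : IsCompact (Set.Icc (0:ℝ) α)).exists_bound_of_continuousOn
    ((hK.continuous_deriv le_rfl).continuousOn)
  have hbdd : BddAbove (Set.range fun x => ⨆ _ : x ∈ Set.Icc (0:ℝ) α, |deriv K x|) := by
    refine ⟨max C 0, ?_⟩
    rintro y ⟨x, rfl⟩
    show (⨆ _ : x ∈ Set.Icc (0:ℝ) α, |deriv K x|) ≤ max C 0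
    by_cases hx : x ∈ Set.Icc (0:ℝ) α
    · rw [ciSup_pos hx]
      exact le_max_of_le_left (by simpa using hC x hx)
    · haveI : IsEmpty (x ∈ Set.Icc (0:ℝ) α) := ⟨hx⟩
      rw [Real.iSup_of_isEmpty]
      exact le_max_right _ _
  have hMK : |Kd| ≤ M := by
    have h1 : (⨆ _ : θ ∈ Set.Icc (0:ℝ) α, |deriv K θ|) ≤ M := le_ciSup hbdd θ
    rwa [ciSup_pos hθmem] at h1
  have hM0 : 0 ≤ M := (abs_nonneg _).trans hMK
  have hN0 : 0 ≤ N := ENNReal.toReal_nonneg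
  have hK1 : |K θ| ≤ 1 := by
    obtain ⟨h01, h11⟩ := hK01 θ hθmem
    rw [abs_le]
    constructor <;> linarith
  -- Hölder bound for the increment
  have hD : ‖R (a * w.re) - c‖ ≤ N * (a ^ ((1:ℝ)/2) * ‖z‖ ^ ((1:ℝ)/2)) := by
    have h1 := holder_half R hR hR2 (a * w.re) (a * ξ₀)
    have h2 : |a * w.re - a * ξ₀| ^ ((1:ℝ)/2) ≤ a ^ ((1:ℝ)/2) * ‖z‖ ^ ((1:ℝ)/2) := by
      have hre' : |w.re - ξ₀| ≤ ‖z‖ := by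
        have := Complex.abs_re_le_norm z
        rwa [hzdef, Complex.sub_re, Complex.ofReal_re] at this
      have h3 : |a * w.re - a * ξ₀| = a * |w.re - ξ₀| := by
        rw [← mul_sub, abs_mul, abs_of_pos ha]
      rw [h3, ← Real.mul_rpow ha.le (norm_nonneg z)]
      exact Real.rpow_le_rpow (by positivity) (by nlinarith) (by norm_num)
    calc ‖R (a * w.re) - c‖ ≤ N * |a * w.re - a * ξ₀| ^ ((1:ℝ)/2) := h1
      _ ≤ N * (a ^ ((1:ℝ)/2) * ‖z‖ ^ ((1:ℝ)/2)) := by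
        exact mul_le_mul_of_nonneg_left h2 hN0
  -- final estimate
  have hRd0 : 0 ≤ a * ‖Rd‖ := by positivity
  have hpow : ‖z‖⁻¹ * ‖z‖ ^ ((1:ℝ)/2) = ‖z‖ ^ (-(1:ℝ)/2) := by
    rw [← Real.rpow_neg_one ‖z‖, ← Real.rpow_add hrpos]
    norm_num
  have hstep : ‖dbar E w‖ ≤ (M * (‖z‖⁻¹ * (N * (a ^ ((1:ℝ)/2) * ‖z‖ ^ ((1:ℝ)/2))))
      + 1 * (a * ‖Rd‖)) / 2 := by
    rw [hdb]
    rw [norm_div]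
    have h2 : ‖(2 : ℂ)‖ = 2 := by norm_num
    rw [h2]
    have hnum : ‖(Kd : ℂ) * (((d1 : ℂ) + Complex.I * (d2 : ℂ)) * (R (a * w.re) - c))
        + ((K θ : ℝ) : ℂ) * ((a : ℂ) * Rd)‖
        ≤ M * (‖z‖⁻¹ * (N * (a ^ ((1:ℝ)/2) * ‖z‖ ^ ((1:ℝ)/2)))) + 1 * (a * ‖Rd‖) := by
      refine (norm_add_le _ _).trans ?_
      rw [norm_mul, norm_mul, norm_mul, norm_mul, hd12norm, Complex.norm_real,
        Complex.norm_real]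
      have hanorm : ‖(a : ℂ)‖ = a := by
        rw [Complex.norm_real, Real.norm_eq_abs, abs_of_pos ha]
      rw [hanorm]
      have t1 : |Kd| * (‖z‖⁻¹ * ‖R (a * w.re) - c‖)
          ≤ M * (‖z‖⁻¹ * (N * (a ^ ((1:ℝ)/2) * ‖z‖ ^ ((1:ℝ)/2)))) := by
        have : ‖z‖⁻¹ * ‖R (a * w.re) - c‖ ≤ ‖z‖⁻¹ * (N * (a ^ ((1:ℝ)/2) * ‖z‖ ^ ((1:ℝ)/2))) :=
          mul_le_mul_of_nonneg_left hD (by positivity)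
        calc |Kd| * (‖z‖⁻¹ * ‖R (a * w.re) - c‖)
            ≤ M * (‖z‖⁻¹ * ‖R (a * w.re) - c‖) :=
              mul_le_mul_of_nonneg_right hMK (by positivity)
          _ ≤ M * (‖z‖⁻¹ * (N * (a ^ ((1:ℝ)/2) * ‖z‖ ^ ((1:ℝ)/2)))) :=
              mul_le_mul_of_nonneg_left this hM0
      have t2 : |K θ| * (a * ‖Rd‖) ≤ 1 * (a * ‖Rd‖) :=
        mul_le_mul_of_nonneg_right hK1 hRd0
      simp only [Real.norm_eq_abs]
      linarith
    exact div_le_div_of_nonneg_right hnum (by norm_num)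
  refine hstep.trans ?_
  have h1 : M * (‖z‖⁻¹ * (N * (a ^ ((1:ℝ)/2) * ‖z‖ ^ ((1:ℝ)/2))))
      = M * N * a ^ ((1:ℝ)/2) * ‖z‖ ^ (-(1:ℝ)/2) := by
    rw [← hpow]; ring
  rw [h1]
  have h2 : (M * N * a ^ ((1:ℝ)/2) * ‖z‖ ^ (-(1:ℝ)/2) + 1 * (a * ‖Rd‖)) / 2
      = M / 2 * N * a ^ ((1:ℝ)/2) * ‖z‖ ^ (-(1:ℝ)/2) + (a * ‖Rd‖) / 2 := by
    ring
  rw [h2]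
  linarith [hRd0]
end
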